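/- arXiv:2503.15813 — 4 statements merged into one kernel-verified Lean document; each statement's English description precedes it below -/
import Mathlib

section
/- Let m ≥ 2. For every R > 0, the first nonzero Neumann eigenvalue of the origin-centered ball of radius R in Gauss space satisfies μ_1(B_R) > 1. -/
set_option maxHeartbeats 1000000


open MeasureTheory Real Set

noncomputable section

/-- A trial function for the radial variational problem on the ball of radius
`R`: `φ ∈ C¹([0,R])` (with derivative `φ'`), `φ(0) = 0`, `φ'(R) = 0`, and `φ`
not identically zero on `[0,R]`. -/
def IsRadialTrial (R : ℝ) (φ φ' : ℝ → ℝ) : Prop :=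
  (∀ r ∈ Icc (0 : ℝ) R, HasDerivWithinAt φ (φ' r) (Icc (0 : ℝ) R) r) ∧
  ContinuousOn φ' (Icc (0 : ℝ) R) ∧
  φ 0 = 0 ∧ φ' R = 0 ∧ ∃ r ∈ Icc (0 : ℝ) R, φ r ≠ 0

/-- The first nonzero Neumann eigenvalue `μ₁(B_R)` of the Ornstein–Uhlenbeck
operator on the origin-centered ball `B_R ⊆ ℝ^m`, via its radial variational
characterization:
`μ₁(B_R) = inf { ∫₀^R (φ'² + (m-1)φ²/r²) e^{-r²/2} r^{m-1} dr
              / ∫₀^R φ² e^{-r²/2} r^{m-1} dr }`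
over `φ ∈ C¹([0,R])` with `φ(0) = 0`, `φ'(R) = 0`, `φ ≢ 0`. -/
def mu1Ball (m : ℕ) (R : ℝ) : ℝ :=
  sInf { q : ℝ | ∃ φ φ' : ℝ → ℝ, IsRadialTrial R φ φ' ∧
    q = (∫ r in Ioo (0 : ℝ) R,
          (φ' r ^ 2 + ((m : ℝ) - 1) * φ r ^ 2 / r ^ 2) *
            Real.exp (-r ^ 2 / 2) * r ^ (m - 1)) /
        (∫ r in Ioo (0 : ℝ) R,
          φ r ^ 2 * Real.exp (-r ^ 2 / 2) * r ^ (m - 1)) }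


lemma integrableOn_of_bdd {R : ℝ} {f : ℝ → ℝ} {C : ℝ}
    (hf : ContinuousOn f (Ioo 0 R)) (hC : ∀ r ∈ Ioo (0:ℝ) R, |f r| ≤ C) :
    IntegrableOn f (Ioo 0 R) := by
  have hmeas : AEStronglyMeasurable f (volume.restrict (Ioo 0 R)) :=
    hf.aestronglyMeasurable measurableSet_Ioo
  refine Integrable.mono' (g := fun _ => C) (integrableOn_const measure_Ioo_lt_top.ne) hmeas ?_
  filter_upwards [ae_restrict_mem measurableSet_Ioo] with r hr
  simpa using hC r hr


lemma mul3_le {a b c A B C : ℝ} (ha : a ≤ A) (hb : b ≤ B) (hc : c ≤ C)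
    (hb0 : 0 ≤ b) (hc0 : 0 ≤ c) (hA0 : 0 ≤ A) (hB0 : 0 ≤ B) : a*b*c ≤ A*B*C :=
  mul_le_mul (mul_le_mul ha hb hb0 hA0) hc hc0 (mul_nonneg hA0 hB0)

lemma mul4_le {a b c d A B C D : ℝ} (ha : a ≤ A) (hb : b ≤ B) (hc : c ≤ C) (hd : d ≤ D)
    (hb0 : 0 ≤ b) (hc0 : 0 ≤ c) (hd0 : 0 ≤ d) (hA0 : 0 ≤ A) (hB0 : 0 ≤ B) (hC0 : 0 ≤ C) :
    a*b*c*d ≤ A*B*C*D :=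
  mul_le_mul (mul3_le ha hb hc hb0 hc0 hA0 hB0) hd hd0
    (mul_nonneg (mul_nonneg hA0 hB0) hC0)


lemma amgm_lemma {z X Y t : ℝ} (hz : 0 ≤ z) (hX : 0 ≤ X) (hY : 0 ≤ Y) (ht : 0 < t)
    (h : z^2 ≤ X*Y) : z ≤ t/2*X + 1/(2*t)*Y := by
  have h1 : 0 ≤ (t^2*X - Y)^2 := sq_nonneg _
  have key : (2*t*z)^2 ≤ (t^2*X + Y)^2 := by nlinarith [mul_pos ht ht]
  have h2 : 2*t*z ≤ t^2*X + Y := by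
    nlinarith [key, mul_nonneg (mul_nonneg (by norm_num : (0:ℝ) ≤ 2) ht.le) hz,
      add_nonneg (mul_nonneg (mul_pos ht ht).le hX) hY]
  have e : t/2*X + 1/(2*t)*Y = (t^2*X + Y)/(2*t) := by field_simp
  rw [e, le_div_iff₀ (by positivity)]
  nlinarith [h2]

lemma sqrt_choice {S c I : ℝ} (hS : 0 ≤ S) (hc : 0 < c) (hI : 0 ≤ I)
    (h : ∀ t : ℝ, 0 < t → S ≤ t/2*I + 1/(2*t)*c) : S^2 ≤ c * I := by
  rcases eq_or_lt_of_le hI with hI0 | hIpos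
  · have hS0 : S ≤ 0 := by
      by_contra hpos
      push_neg at hpos
      have h2 := h (c/S) (by positivity)
      rw [← hI0] at h2
      have e : c/S/2*0 + 1/(2*(c/S))*c = S/2 := by field_simp; ring
      rw [e] at h2
      linarith
    have hSz : S = 0 := le_antisymm hS0 hS
    rw [hSz, ← hI0]
    norm_num
  · set t := Real.sqrt (c/I) with htdef
    have ht : 0 < t := Real.sqrt_pos.2 (by positivity)
    have ht2 : t^2 = c/I := Real.sq_sqrt (by positivity)
    have hc' : c = t^2 * I := by rw [ht2]; field_simp
    have e : t/2*I + 1/(2*t)*c = t*I := by rw [hc']; field_simp; ring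
    have h3 := h t ht
    rw [e] at h3
    calc S^2 ≤ (t*I)^2 := pow_le_pow_left₀ hS h3 2
    _ = c*I := by rw [hc']; ring

lemma phi_bound {R : ℝ} {φ φ' : ℝ → ℝ} (hR : 0 < R)
    (hd : ∀ r ∈ Icc (0:ℝ) R, HasDerivWithinAt φ (φ' r) (Icc (0:ℝ) R) r)
    (hc : ContinuousOn φ' (Icc (0:ℝ) R)) (h0 : φ 0 = 0) :
    ∃ L : ℝ, 0 < L ∧ (∀ r ∈ Icc (0:ℝ) R, |φ' r| ≤ L) ∧
      (∀ r ∈ Icc (0:ℝ) R, |φ r| ≤ L * r) := by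
  obtain ⟨C, hCb⟩ := isCompact_Icc.exists_bound_of_continuousOn hc
  refine ⟨max C 1, lt_of_lt_of_le one_pos (le_max_right _ _), ?_, ?_⟩
  · intro r hr; exact le_trans (hCb r hr) (le_max_left _ _)
  · intro r hr
    have := Convex.norm_image_sub_le_of_norm_hasDerivWithin_le (𝕜 := ℝ)
      hd (fun x hx => le_trans (hCb x hx) (le_max_left C 1)) (convex_Icc _ _)
      (left_mem_Icc.2 hR.le) hr
    simpa [h0, abs_of_nonneg hr.1] using this

section
variable {k : ℕ} {R : ℝ} {φ φ' : ℝ → ℝ} {L : ℝ}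

lemma contOn_phi (hd : ∀ r ∈ Icc (0:ℝ) R, HasDerivWithinAt φ (φ' r) (Icc (0:ℝ) R) r) :
    ContinuousOn φ (Icc (0:ℝ) R) := fun r hr => (hd r hr).continuousWithinAt

-- integrability of the four integrands
lemma integr_all (hR : 0 < R)
    (hd : ∀ r ∈ Icc (0:ℝ) R, HasDerivWithinAt φ (φ' r) (Icc (0:ℝ) R) r)
    (hc : ContinuousOn φ' (Icc (0:ℝ) R))
    (hL0 : 0 ≤ L)
    (hL1 : ∀ r ∈ Icc (0:ℝ) R, |φ' r| ≤ L)
    (hL2 : ∀ r ∈ Icc (0:ℝ) R, |φ r| ≤ L * r) :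
    IntegrableOn (fun r => φ r^2 * Real.exp (-r^2/2) * r^(k+1)) (Ioo 0 R) ∧
    IntegrableOn (fun r => (φ' r - φ r / r)^2 * Real.exp (-r^2/2) * r^(k+1)) (Ioo 0 R) ∧
    IntegrableOn (fun r => (φ' r^2 + ((k:ℝ)+1) * φ r^2 / r^2) * Real.exp (-r^2/2) * r^(k+1)) (Ioo 0 R) ∧
    IntegrableOn (fun r => 2*φ r*φ' r*r^k*Real.exp (-r^2/2)
      + (k:ℝ)*(φ r^2/r^2)*r^(k+1)*Real.exp (-r^2/2) - φ r^2*r^(k+1)*Real.exp (-r^2/2)) (Ioo 0 R) := by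
  have hsub : Ioo (0:ℝ) R ⊆ Icc 0 R := Ioo_subset_Icc_self
  have hφ : ContinuousOn φ (Ioo 0 R) := (contOn_phi hd).mono hsub
  have hφ' : ContinuousOn φ' (Ioo 0 R) := hc.mono hsub
  have hw : ContinuousOn (fun r : ℝ => Real.exp (-r^2/2)) (Ioo 0 R) :=
    (Real.continuous_exp.comp (by continuity)).continuousOn
  have hwle : ∀ r : ℝ, Real.exp (-r^2/2) ≤ 1 := fun r => by
    rw [Real.exp_le_one_iff]; nlinarith [sq_nonneg r]
  have hwpos : ∀ r : ℝ, 0 < Real.exp (-r^2/2) := fun r => Real.exp_pos _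
  set Mx := max 1 R with hMx
  have hMx1 : (1:ℝ) ≤ Mx := le_max_left _ _
  have hpow : ∀ r ∈ Ioo (0:ℝ) R, ∀ j : ℕ, r^j ≤ Mx^j := by
    intro r hr j
    exact pow_le_pow_left₀ hr.1.le (le_trans hr.2.le (le_max_right _ _)) j
  have hbφ : ∀ r ∈ Ioo (0:ℝ) R, |φ r| ≤ L * R := by
    intro r hr
    exact le_trans (hL2 r (hsub hr)) (by nlinarith [hr.2, hr.1, hL0])
  have hbφ' : ∀ r ∈ Ioo (0:ℝ) R, |φ' r| ≤ L := fun r hr => hL1 r (hsub hr)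
  have hbq : ∀ r ∈ Ioo (0:ℝ) R, |φ r / r| ≤ L := by
    intro r hr
    rw [abs_div, abs_of_pos hr.1, div_le_iff₀ hr.1]
    exact hL2 r (hsub hr)
  refine ⟨?_, ?_, ?_, ?_⟩
  · refine integrableOn_of_bdd (C := (L*R)^2 * 1 * Mx^(k+1)) ?_ ?_
    · exact ((hφ.pow 2).mul hw).mul (continuousOn_pow _)
    · intro r hr
      rw [abs_mul, abs_mul, abs_pow, abs_pow, abs_of_pos (hwpos r), abs_of_pos hr.1]
      refine mul3_le (by nlinarith [hbφ r hr, abs_nonneg (φ r)]) (hwle r) (hpow r hr _)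
        (Real.exp_pos _).le (pow_nonneg hr.1.le _) (by positivity) zero_le_one
  · refine integrableOn_of_bdd (C := (2*L)^2 * 1 * Mx^(k+1)) ?_ ?_
    · refine (((hφ'.sub (hφ.div continuousOn_id (fun r hr => ne_of_gt hr.1))).pow 2).mul hw).mul
        (continuousOn_pow _)
    · intro r hr
      rw [abs_mul, abs_mul, abs_pow, abs_pow, abs_of_pos (hwpos r), abs_of_pos hr.1]
      have : |φ' r - φ r / r| ≤ 2*L := by
        calc |φ' r - φ r / r| ≤ |φ' r| + |φ r / r| := abs_sub _ _
        _ ≤ L + L := add_le_add (hbφ' r hr) (hbq r hr)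
        _ = 2*L := by ring
      refine mul3_le (by nlinarith [this, abs_nonneg (φ' r - φ r / r)]) (hwle r) (hpow r hr _)
        (Real.exp_pos _).le (pow_nonneg hr.1.le _) (by positivity) zero_le_one
  · refine integrableOn_of_bdd (C := (L^2 + ((k:ℝ)+1)*L^2) * 1 * Mx^(k+1)) ?_ ?_
    · exact (((((hφ'.pow 2)).add ((continuousOn_const.mul (hφ.pow 2)).div (continuousOn_pow 2)
        (fun r hr => pow_ne_zero 2 (ne_of_gt hr.1)))).mul hw).mul (continuousOn_pow _))
    · intro r hr
      rw [abs_mul, abs_mul, abs_pow, abs_of_pos (hwpos r), abs_of_pos hr.1]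
      have h1 : |φ' r ^2 + ((k:ℝ)+1) * φ r^2 / r^2| ≤ L^2 + ((k:ℝ)+1)*L^2 := by
        have e1 : ((k:ℝ)+1) * φ r^2 / r^2 = ((k:ℝ)+1) * (φ r / r)^2 := by
          field_simp
        rw [e1]
        have h2 : (φ r / r)^2 ≤ L^2 := by
          have := hbq r hr
          nlinarith [abs_nonneg (φ r / r), neg_abs_le (φ r / r), le_abs_self (φ r / r)]
        have h3 : φ' r ^2 ≤ L^2 := by
          have := hbφ' r hr
          nlinarith [abs_nonneg (φ' r), neg_abs_le (φ' r), le_abs_self (φ' r)]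
        calc |φ' r ^2 + ((k:ℝ)+1) * (φ r / r)^2| = φ' r^2 + ((k:ℝ)+1) * (φ r / r)^2 := by
              rw [abs_of_nonneg]; positivity
        _ ≤ L^2 + ((k:ℝ)+1)*L^2 := by nlinarith [k.cast_nonneg (α := ℝ)]
      refine mul3_le h1 (hwle r) (hpow r hr _)
        (Real.exp_pos _).le (pow_nonneg hr.1.le _) (by positivity) zero_le_one
  · have c1 : IntegrableOn (fun r => 2*φ r*φ' r*r^k*Real.exp (-r^2/2)) (Ioo 0 R) := by
      refine integrableOn_of_bdd (C := 2*(L*R)*L*Mx^k*1) ?_ ?_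
      · exact (((continuousOn_const.mul hφ).mul hφ').mul (continuousOn_pow _)).mul hw
      · intro r hr
        rw [abs_mul, abs_mul, abs_mul, abs_mul, abs_pow, abs_of_pos (hwpos r), abs_of_pos hr.1]
        simp only [abs_two]
        refine mul4_le ?_ (hbφ' r hr) (hpow r hr _) (hwle r) (abs_nonneg _)
          (pow_nonneg hr.1.le _) (Real.exp_pos _).le (by positivity) hL0 (by positivity)
        nlinarith [hbφ r hr, abs_nonneg (φ r)]
    have c2 : IntegrableOn (fun r => (k:ℝ)*(φ r^2/r^2)*r^(k+1)*Real.exp (-r^2/2)) (Ioo 0 R) := by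
      refine integrableOn_of_bdd (C := (k:ℝ)*L^2*Mx^(k+1)*1) ?_ ?_
      · exact ((continuousOn_const.mul ((hφ.pow 2).div (continuousOn_pow 2)
          (fun r hr => pow_ne_zero 2 (ne_of_gt hr.1)))).mul (continuousOn_pow _)).mul hw
      · intro r hr
        rw [abs_mul, abs_mul, abs_mul, abs_pow, abs_of_pos (hwpos r), abs_of_pos hr.1]
        have h2 : |φ r^2 / r^2| ≤ L^2 := by
          have e1 : φ r^2 / r^2 = (φ r / r)^2 := by field_simp
          rw [e1, abs_pow]
          have := hbq r hr
          nlinarith [abs_nonneg (φ r / r)]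
        rw [Nat.abs_cast]
        refine mul4_le le_rfl h2 (hpow r hr _) (hwle r) (abs_nonneg _)
          (pow_nonneg hr.1.le _) (Real.exp_pos _).le (Nat.cast_nonneg _) (by positivity)
          (by positivity)
    have c3 : IntegrableOn (fun r => φ r^2*r^(k+1)*Real.exp (-r^2/2)) (Ioo 0 R) := by
      refine integrableOn_of_bdd (C := (L*R)^2*Mx^(k+1)*1) ?_ ?_
      · exact ((hφ.pow 2).mul (continuousOn_pow _)).mul hw
      · intro r hr
        rw [abs_mul, abs_mul, abs_pow, abs_pow, abs_of_pos (hwpos r), abs_of_pos hr.1]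
        refine mul3_le (by nlinarith [hbφ r hr, abs_nonneg (φ r)]) (hpow r hr _) (hwle r)
          (pow_nonneg hr.1.le _) (Real.exp_pos _).le (by positivity) (by positivity)
    exact (c1.add c2).sub c3

lemma identity_lemma (hR : 0 < R)
    (hd : ∀ r ∈ Icc (0:ℝ) R, HasDerivWithinAt φ (φ' r) (Icc (0:ℝ) R) r)
    (hc : ContinuousOn φ' (Icc (0:ℝ) R))
    (h0 : φ 0 = 0)
    (hL0 : 0 ≤ L)
    (hL1 : ∀ r ∈ Icc (0:ℝ) R, |φ' r| ≤ L)
    (hL2 : ∀ r ∈ Icc (0:ℝ) R, |φ r| ≤ L * r) :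
    (∫ r in Ioo (0:ℝ) R, (φ' r^2 + ((k:ℝ)+1) * φ r^2 / r^2) * Real.exp (-r^2/2) * r^(k+1))
      = (∫ r in Ioo (0:ℝ) R, φ r^2 * Real.exp (-r^2/2) * r^(k+1))
      + (∫ r in Ioo (0:ℝ) R, (φ' r - φ r / r)^2 * Real.exp (-r^2/2) * r^(k+1))
      + φ R^2 * R^k * Real.exp (-R^2/2) := by
  obtain ⟨hiD, hiI, hiN, hiG⟩ := integr_all (k := k) hR hd hc hL0 hL1 hL2
  set G : ℝ → ℝ := fun r => 2*φ r*φ' r*r^k*Real.exp (-r^2/2)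
      + (k:ℝ)*(φ r^2/r^2)*r^(k+1)*Real.exp (-r^2/2) - φ r^2*r^(k+1)*Real.exp (-r^2/2) with hG
  set F : ℝ → ℝ := fun r => φ r^2 * r^k * Real.exp (-r^2/2) with hF
  -- derivative of F
  have hFd : ∀ r ∈ Ioo (0:ℝ) R, HasDerivAt F (G r) r := by
    intro r hr
    have hφr : HasDerivAt φ (φ' r) r :=
      (hd r (Ioo_subset_Icc_self hr)).hasDerivAt (Icc_mem_nhds hr.1 hr.2)
    have h1 : HasDerivAt (fun r => φ r^2) (2*φ r*φ' r) r := by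
      have := hφr.pow 2
      refine this.congr_deriv ?_
      push_cast
      ring
    have h2 : HasDerivAt (fun r : ℝ => r^k) ((k:ℝ)*r^(k-1)) r := hasDerivAt_pow k r
    have h3 : HasDerivAt (fun r : ℝ => Real.exp (-r^2/2)) (Real.exp (-r^2/2) * (-r)) r := by
      have h : HasDerivAt (fun r : ℝ => -r^2/2) (-r) r := by
        have := ((hasDerivAt_pow 2 r).neg.div_const 2)
        refine this.congr_deriv ?_
        ring
      exact h.exp
    have := (h1.mul h2).mul h3
    refine this.congr_deriv ?_
    have hr0 : r ≠ 0 := ne_of_gt hr.1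
    have hk : (k:ℝ)*r^(k-1)*r^2 = (k:ℝ)*r^(k+1) := by
      cases k with
      | zero => simp
      | succ n => simp only [Nat.add_sub_cancel]; ring
    have hk2 : (k:ℝ)*(φ r^2/r^2)*r^(k+1) = φ r^2 * ((k:ℝ)*r^(k-1)) := by
      field_simp
      linear_combination (-1 : ℝ) * (φ r^2) * hk
    simp only [hG]
    rw [hk2]
    rw [pow_succ]
    simp only [Pi.mul_apply]
    ring
  -- FTC
  have hFc : ContinuousOn F (Icc 0 R) := by
    exact (((contOn_phi hd).pow 2).mul (continuousOn_pow k)).mul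
      ((Real.continuous_exp.comp (by continuity)).continuousOn)
  have hGi : IntervalIntegrable G volume 0 R := by
    exact (intervalIntegrable_iff_integrableOn_Ioo_of_le hR.le).mpr hiG
  have hftc : ∫ r in (0:ℝ)..R, G r = F R - F 0 :=
    intervalIntegral.integral_eq_sub_of_hasDeriv_right_of_le hR.le hFc
      (fun x hx => (hFd x hx).hasDerivWithinAt) hGi
  have hF0 : F 0 = 0 := by simp [hF, h0]
  have hIooG : ∫ r in Ioo (0:ℝ) R, G r = φ R^2 * R^k * Real.exp (-R^2/2) := by
    rw [← integral_Ioc_eq_integral_Ioo, ← intervalIntegral.integral_of_le hR.le, hftc, hF0]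
    simp [hF]
  -- pointwise identity
  have hpt : EqOn (fun r => (φ' r^2 + ((k:ℝ)+1) * φ r^2 / r^2) * Real.exp (-r^2/2) * r^(k+1))
      (fun r => (φ r^2 * Real.exp (-r^2/2) * r^(k+1))
        + ((φ' r - φ r / r)^2 * Real.exp (-r^2/2) * r^(k+1)) + G r) (Ioo 0 R) := by
    intro r hr
    have hr0 : r ≠ 0 := ne_of_gt hr.1
    simp only [hG]
    rw [pow_succ]
    field_simp
    ring
  rw [setIntegral_congr_fun measurableSet_Ioo hpt]
  have e1 : (∫ x in Ioo (0:ℝ) R, ((φ x^2 * Real.exp (-x^2/2) * x^(k+1)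
        + (φ' x - φ x / x)^2 * Real.exp (-x^2/2) * x^(k+1)) + G x))
      = (∫ x in Ioo (0:ℝ) R, (φ x^2 * Real.exp (-x^2/2) * x^(k+1)
        + (φ' x - φ x / x)^2 * Real.exp (-x^2/2) * x^(k+1)))
      + ∫ x in Ioo (0:ℝ) R, G x := integral_add (hiD.add hiI) hiG
  have e2 : (∫ x in Ioo (0:ℝ) R, (φ x^2 * Real.exp (-x^2/2) * x^(k+1)
        + (φ' x - φ x / x)^2 * Real.exp (-x^2/2) * x^(k+1)))
      = (∫ r in Ioo (0:ℝ) R, φ r^2 * Real.exp (-r^2/2) * r^(k+1))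
      + (∫ r in Ioo (0:ℝ) R, (φ' r - φ r / r)^2 * Real.exp (-r^2/2) * r^(k+1)) :=
    integral_add hiD hiI
  rw [e1, e2, hIooG]

lemma poincare (hR : 0 < R)
    (hd : ∀ r ∈ Icc (0:ℝ) R, HasDerivWithinAt φ (φ' r) (Icc (0:ℝ) R) r)
    (hc : ContinuousOn φ' (Icc (0:ℝ) R))
    (hL0 : 0 ≤ L)
    (hL1 : ∀ r ∈ Icc (0:ℝ) R, |φ' r| ≤ L)
    (hL2 : ∀ r ∈ Icc (0:ℝ) R, |φ r| ≤ L * r) :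
    (∫ r in Ioo (0:ℝ) R, φ r^2 * Real.exp (-r^2/2) * r^(k+1))
      ≤ (2*(φ R/R)^2*R^(k+3) + 2*Real.exp (R^2/2)
          * (∫ r in Ioo (0:ℝ) R, (φ' r - φ r / r)^2 * Real.exp (-r^2/2) * r^(k+1)) * R) * R := by
  obtain ⟨hiD, hiI, hiN, hiG⟩ := integr_all (k := k) hR hd hc hL0 hL1 hL2
  set I : ℝ := ∫ r in Ioo (0:ℝ) R, (φ' r - φ r / r)^2 * Real.exp (-r^2/2) * r^(k+1) with hIdef
  have hI0 : 0 ≤ I := by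
    apply setIntegral_nonneg measurableSet_Ioo
    intro r hr
    have : (0:ℝ) < r := hr.1
    positivity
  have hwle : ∀ r : ℝ, Real.exp (-r^2/2) ≤ 1 := fun r => by
    rw [Real.exp_le_one_iff]; nlinarith [sq_nonneg r]
  set h' : ℝ → ℝ := fun s => (φ' s * s - φ s)/s^2 with hh'def
  have hcontφ : ContinuousOn φ (Icc 0 R) := contOn_phi hd
  -- pointwise bound via FTC on [r, R]
  have hpt : ∀ r ∈ Ioo (0:ℝ) R,
      (φ r/r)^2 ≤ 2*(φ R/R)^2 + 2*((Real.exp (R^2/2)/r^(k+2))*I) := by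
    intro r hr
    have hr0 : (0:ℝ) < r := hr.1
    have hrR : r ≤ R := hr.2.le
    have hsubI : Icc r R ⊆ Icc 0 R := Icc_subset_Icc hr0.le le_rfl
    have hspos : ∀ s ∈ Icc r R, (0:ℝ) < s := fun s hs => lt_of_lt_of_le hr0 hs.1
    have hch : ContinuousOn (fun s => φ s / s) (Icc r R) :=
      (hcontφ.mono hsubI).div continuousOn_id (fun s hs => ne_of_gt (hspos s hs))
    have hch' : ContinuousOn h' (Icc r R) := by
      apply ContinuousOn.div
      · exact ((hc.mono hsubI).mul continuousOn_id).sub (hcontφ.mono hsubI)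
      · exact continuousOn_pow 2
      · exact fun s hs => pow_ne_zero 2 (ne_of_gt (hspos s hs))
    have hderiv : ∀ x ∈ Ioo r R, HasDerivWithinAt (fun s => φ s / s) (h' x) (Ioi x) x := by
      intro x hx
      have hx0 : (0:ℝ) < x := lt_trans hr0 hx.1
      have hφx : HasDerivAt φ (φ' x) x :=
        (hd x ⟨hx0.le, hx.2.le⟩).hasDerivAt (Icc_mem_nhds hx0 hx.2)
      have := hφx.div (hasDerivAt_id x) (ne_of_gt hx0)
      have e : (φ' x * id x - φ x * 1)/(id x)^2 = h' x := by simp [hh'def]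
      exact (e ▸ this).hasDerivWithinAt
    have hinth' : IntervalIntegrable h' volume r R := by
      apply ContinuousOn.intervalIntegrable
      rwa [uIcc_of_le hrR]
    have hftc : ∫ s in r..R, h' s = φ R / R - φ r / r :=
      intervalIntegral.integral_eq_sub_of_hasDeriv_right_of_le hrR hch hderiv hinth'
    set S : ℝ := ∫ s in r..R, |h' s| with hSdef
    have hS0 : 0 ≤ S := intervalIntegral.integral_nonneg hrR (fun s _ => abs_nonneg _)
    have htri : |φ r / r| ≤ |φ R / R| + S := by
      have h1 : |∫ s in r..R, h' s| ≤ S :=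
        intervalIntegral.abs_integral_le_integral_abs hrR
      rw [hftc] at h1
      have := abs_sub_abs_le_abs_sub (φ r / r) (φ R / R)
      have h2 : |φ r / r - φ R / R| = |φ R / R - φ r / r| := abs_sub_comm _ _
      linarith [abs_sub_abs_le_abs_sub (φ r / r) (φ R / R), h2 ▸ h1]
    -- AM-GM integral bound
    have hSbound : ∀ t : ℝ, 0 < t → S ≤ t/2*I + 1/(2*t)*(Real.exp (R^2/2)/r^(k+2)) := by
      intro t ht
      have hmono : S ≤ ∫ s in r..R,
          (t/2*((φ' s - φ s / s)^2 * Real.exp (-s^2/2) * s^(k+1))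
            + 1/(2*t)*(Real.exp (R^2/2)/s^(k+3))) := by
        apply intervalIntegral.integral_mono_on hrR
        · apply ContinuousOn.intervalIntegrable
          rw [uIcc_of_le hrR]
          exact hch'.abs
        · apply ContinuousOn.intervalIntegrable
          rw [uIcc_of_le hrR]
          apply ContinuousOn.add
          · exact continuousOn_const.mul ((((hc.mono hsubI).sub hch).pow 2).mul
              ((Real.continuous_exp.comp (by continuity)).continuousOn) |>.mul (continuousOn_pow _))
          · exact continuousOn_const.mul (continuousOn_const.div (continuousOn_pow _)
              (fun s hs => pow_ne_zero _ (ne_of_gt (hspos s hs))))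
        · intro s hs
          have hs0 : (0:ℝ) < s := hspos s hs
          have hsR : s ≤ R := hs.2
          have hsne : s ≠ 0 := ne_of_gt hs0
          apply amgm_lemma (abs_nonneg _)
            (mul_nonneg (mul_nonneg (sq_nonneg _) (Real.exp_pos _).le) (pow_nonneg hs0.le _))
            (div_nonneg (Real.exp_pos _).le (pow_nonneg hs0.le _)) ht
          have hws : 1 ≤ Real.exp (-s^2/2) * Real.exp (R^2/2) := by
            rw [← Real.exp_add]
            apply Real.one_le_exp
            nlinarith
          have e0 : h' s = (φ' s - φ s/s) / s := by
            simp only [hh'def]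
            rw [div_eq_div_iff (pow_ne_zero 2 hsne) hsne]
            have hcan : φ s / s * s^2 = φ s * s := by
              rw [pow_two, ← mul_assoc, div_mul_cancel₀ _ hsne]
            linear_combination hcan
          have e1 : |h' s|^2 = (φ' s - φ s/s)^2/s^2 := by
            rw [sq_abs, e0, div_pow]
          have e2 : (φ' s - φ s / s)^2 * Real.exp (-s^2/2) * s^(k+1) * (Real.exp (R^2/2)/s^(k+3))
              = ((φ' s - φ s/s)^2/s^2) * (Real.exp (-s^2/2) * Real.exp (R^2/2)) := by
            rw [← mul_div_assoc, div_mul_eq_mul_div,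
              div_eq_div_iff (pow_ne_zero _ hsne) (pow_ne_zero _ hsne)]
            ring
          rw [e1, e2]
          nlinarith [sq_nonneg ((φ' s - φ s/s)/s), hws, div_nonneg (sq_nonneg (φ' s - φ s/s)) (sq_nonneg s)]
      have hsplit : (∫ s in r..R,
          (t/2*((φ' s - φ s / s)^2 * Real.exp (-s^2/2) * s^(k+1))
            + 1/(2*t)*(Real.exp (R^2/2)/s^(k+3))))
          = t/2*(∫ s in r..R, (φ' s - φ s / s)^2 * Real.exp (-s^2/2) * s^(k+1))
            + 1/(2*t)*(∫ s in r..R, Real.exp (R^2/2)/s^(k+3)) := by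
        rw [intervalIntegral.integral_add, intervalIntegral.integral_const_mul,
          intervalIntegral.integral_const_mul]
        · apply ContinuousOn.intervalIntegrable
          rw [uIcc_of_le hrR]
          exact continuousOn_const.mul ((((hc.mono hsubI).sub hch).pow 2).mul
            ((Real.continuous_exp.comp (by continuity)).continuousOn) |>.mul (continuousOn_pow _))
        · apply ContinuousOn.intervalIntegrable
          rw [uIcc_of_le hrR]
          exact continuousOn_const.mul (continuousOn_const.div (continuousOn_pow _)
            (fun s hs => pow_ne_zero _ (ne_of_gt (hspos s hs))))
      have hIle : (∫ s in r..R, (φ' s - φ s / s)^2 * Real.exp (-s^2/2) * s^(k+1)) ≤ I := by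
        rw [intervalIntegral.integral_of_le hrR, integral_Ioc_eq_integral_Ioo]
        apply setIntegral_mono_set hiI
        · filter_upwards [ae_restrict_mem measurableSet_Ioo] with s hs
          exact mul_nonneg (mul_nonneg (sq_nonneg _) (Real.exp_pos _).le)
            (pow_nonneg hs.1.le _)
        · exact HasSubset.Subset.eventuallyLE (Ioo_subset_Ioo hr0.le le_rfl)
      have hYle : (∫ s in r..R, Real.exp (R^2/2)/s^(k+3)) ≤ Real.exp (R^2/2)/r^(k+2) := by
        set A : ℝ → ℝ := fun s => -(((k:ℝ)+2)⁻¹) * (s^(k+2))⁻¹ with hAdef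
        have hAderiv : ∀ s ∈ Icc r R, HasDerivAt A (1/s^(k+3)) s := by
          intro s hs
          have hs0 : (0:ℝ) < s := hspos s hs
          have hsne : s ≠ 0 := ne_of_gt hs0
          have hp : HasDerivAt (fun y : ℝ => y^(k+2)) (((k:ℝ)+2)*s^(k+1)) s := by
            have h := hasDerivAt_pow (k+2) s
            have : ((k+2:ℕ):ℝ) * s^(k+2-1) = ((k:ℝ)+2)*s^(k+1) := by
              push_cast
              try norm_num
            rwa [this] at h
          have hinv : HasDerivAt (fun y : ℝ => (y^(k+2))⁻¹)
              (-(((k:ℝ)+2)*s^(k+1))/(s^(k+2))^2) s := hp.inv (pow_ne_zero _ hsne)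
          have h2 := hinv.const_mul (-(((k:ℝ)+2)⁻¹))
          have heq : -(((k:ℝ)+2)⁻¹) * (-(((k:ℝ)+2)*s^(k+1))/(s^(k+2))^2) = 1/s^(k+3) := by
            have hsq : (s^(k+2))^2 = s^(k+1) * s^(k+3) := by
              rw [← pow_mul, ← pow_add]
              congr 1
              omega
            have h1 : ((k:ℝ)+2) ≠ 0 := by positivity
            rw [hsq]
            field_simp
            try ring
          rw [heq] at h2
          exact h2
        have hint1 : ∫ s in r..R, 1/s^(k+3) = A R - A r := by
          apply intervalIntegral.integral_eq_sub_of_hasDerivAt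
          · intro s hs
            rw [uIcc_of_le hrR] at hs
            exact hAderiv s hs
          · apply ContinuousOn.intervalIntegrable
            rw [uIcc_of_le hrR]
            exact continuousOn_const.div (continuousOn_pow _)
              (fun s hs => pow_ne_zero _ (ne_of_gt (hspos s hs)))
        have hint2 : ∫ s in r..R, Real.exp (R^2/2)/s^(k+3)
            = Real.exp (R^2/2) * ∫ s in r..R, 1/s^(k+3) := by
          rw [← intervalIntegral.integral_const_mul]
          congr 1
          funext s
          ring
        rw [hint2, hint1]
        have h1 : (0:ℝ) < (k:ℝ)+2 := by positivity
        have h2 : (0:ℝ) < r^(k+2) := by positivity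
        have h3 : (0:ℝ) < R^(k+2) := by positivity
        have h4 : ((k:ℝ)+2)⁻¹ ≤ 1 := by
          rw [inv_le_one_iff₀]
          right; linarith
        have hAR : A R - A r ≤ 1/r^(k+2) := by
          simp only [hAdef]
          have e : -(((k:ℝ)+2)⁻¹) * (R^(k+2))⁻¹ - -(((k:ℝ)+2)⁻¹) * (r^(k+2))⁻¹
              = ((k:ℝ)+2)⁻¹ * ((r^(k+2))⁻¹ - (R^(k+2))⁻¹) := by ring
          rw [e]
          have : ((k:ℝ)+2)⁻¹ * ((r^(k+2))⁻¹ - (R^(k+2))⁻¹) ≤ 1 * (r^(k+2))⁻¹ := by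
            apply mul_le_mul h4 _ _ zero_le_one
            · nlinarith [inv_pos.2 h3]
            · exact sub_nonneg.2 (inv_anti₀ h2 (pow_le_pow_left₀ hr0.le hrR _))
          rw [one_mul] at this
          rw [one_div]
          exact this
        calc Real.exp (R^2/2) * (A R - A r) ≤ Real.exp (R^2/2) * (1/r^(k+2)) :=
              mul_le_mul_of_nonneg_left hAR (Real.exp_pos _).le
        _ = Real.exp (R^2/2)/r^(k+2) := by ring
      calc S ≤ _ := hmono
      _ = _ := hsplit
      _ ≤ t/2*I + 1/(2*t)*(Real.exp (R^2/2)/r^(k+2)) := by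
        have ht2 : 0 < t/2 := by linarith
        have ht3 : (0:ℝ) < 1/(2*t) := by positivity
        apply add_le_add
        · exact mul_le_mul_of_nonneg_left hIle ht2.le
        · exact mul_le_mul_of_nonneg_left hYle ht3.le
    -- apply sqrt_choice
    have hS2 : S^2 ≤ (Real.exp (R^2/2)/r^(k+2)) * I := by
      apply sqrt_choice hS0 (by positivity) hI0
      intro t ht
      exact hSbound t ht
    have habs : (φ r/r)^2 ≤ 2*(φ R/R)^2 + 2*S^2 := by
      nlinarith [mul_self_le_mul_self (abs_nonneg (φ r / r)) htri, sq_abs (φ r / r),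
        sq_abs (φ R / R), hS0, abs_nonneg (φ R / R), sq_nonneg (|φ R / R| - S)]
    nlinarith [hS2, habs]
  -- integrate the pointwise bound
  have hb : ∀ r ∈ Ioo (0:ℝ) R, φ r^2 * Real.exp (-r^2/2) * r^(k+1)
      ≤ 2*(φ R/R)^2*R^(k+3) + 2*Real.exp (R^2/2)*I*R := by
    intro r hr
    have hr0 : (0:ℝ) < r := hr.1
    have hrR : r ≤ R := hr.2.le
    have e1 : φ r^2 * Real.exp (-r^2/2) * r^(k+1) = (φ r/r)^2 * r^(k+3) * Real.exp (-r^2/2) := by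
      have : r^(k+3) = r^2 * r^(k+1) := by ring
      rw [this]
      field_simp
    rw [e1]
    have h1 : (φ r/r)^2 * r^(k+3) * Real.exp (-r^2/2) ≤ (φ r/r)^2 * r^(k+3) * 1 := by
      apply mul_le_mul_of_nonneg_left (hwle r) (by positivity)
    have h2 : (φ r/r)^2 * r^(k+3) ≤ (2*(φ R/R)^2 + 2*((Real.exp (R^2/2)/r^(k+2))*I)) * r^(k+3) :=
      mul_le_mul_of_nonneg_right (hpt r hr) (by positivity)
    have h3 : (2*(φ R/R)^2 + 2*((Real.exp (R^2/2)/r^(k+2))*I)) * r^(k+3)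
        = 2*(φ R/R)^2*r^(k+3) + 2*Real.exp (R^2/2)*I*r := by
      have hrk : r^(k+3) = r^(k+2) * r := by ring
      rw [hrk]
      field_simp
    have h4 : 2*(φ R/R)^2*r^(k+3) ≤ 2*(φ R/R)^2*R^(k+3) :=
      mul_le_mul_of_nonneg_left (pow_le_pow_left₀ hr0.le hrR _) (by positivity)
    have h5 : 2*Real.exp (R^2/2)*I*r ≤ 2*Real.exp (R^2/2)*I*R :=
      mul_le_mul_of_nonneg_left hrR (by positivity)
    nlinarith [h1, h2, h3, h4, h5]
  have hconst : (∫ r in Ioo (0:ℝ) R, φ r^2 * Real.exp (-r^2/2) * r^(k+1))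
      ≤ ∫ _r in Ioo (0:ℝ) R, (2*(φ R/R)^2*R^(k+3) + 2*Real.exp (R^2/2)*I*R) := by
    apply setIntegral_mono_on hiD (integrableOn_const measure_Ioo_lt_top.ne)
      measurableSet_Ioo hb
  rw [setIntegral_const] at hconst
  rw [Real.volume_real_Ioo] at hconst
  simp only [sub_zero, smul_eq_mul] at hconst
  rw [max_eq_left hR.le] at hconst
  calc (∫ r in Ioo (0:ℝ) R, φ r^2 * Real.exp (-r^2/2) * r^(k+1)) ≤ _ := hconst
  _ = (2*(φ R/R)^2*R^(k+3) + 2*Real.exp (R^2/2)*I*R) * R := by ring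

lemma Dpos (hR : 0 < R)
    (hd : ∀ r ∈ Icc (0:ℝ) R, HasDerivWithinAt φ (φ' r) (Icc (0:ℝ) R) r)
    (hc : ContinuousOn φ' (Icc (0:ℝ) R))
    (h0 : φ 0 = 0)
    (hL0 : 0 ≤ L)
    (hL1 : ∀ r ∈ Icc (0:ℝ) R, |φ' r| ≤ L)
    (hL2 : ∀ r ∈ Icc (0:ℝ) R, |φ r| ≤ L * r)
    (hne : ∃ r ∈ Icc (0:ℝ) R, φ r ≠ 0) :
    0 < ∫ r in Ioo (0:ℝ) R, φ r^2 * Real.exp (-r^2/2) * r^(k+1) := by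
  obtain ⟨hiD, hiI, hiN, hiG⟩ := integr_all (k := k) hR hd hc hL0 hL1 hL2
  obtain ⟨r₀, hr₀, hφr₀⟩ := hne
  have hr₀0 : 0 < r₀ := by
    rcases lt_or_eq_of_le hr₀.1 with h | h
    · exact h
    · exact absurd (by rw [← h]; exact h0) hφr₀
  -- continuity at r₀ within Icc
  have hcw : ContinuousWithinAt φ (Icc 0 R) r₀ := (contOn_phi hd) r₀ hr₀
  have hev : ∀ᶠ s in nhdsWithin r₀ (Icc 0 R), |φ s| > |φ r₀|/2 := by
    have : {y : ℝ | |y| > |φ r₀|/2} ∈ nhds (φ r₀) := by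
      apply IsOpen.mem_nhds
      · exact isOpen_lt continuous_const continuous_abs
      · simp only [mem_setOf_eq]
        have := abs_pos.2 hφr₀
        linarith
    exact hcw this
  rw [eventually_nhdsWithin_iff] at hev
  rw [Metric.eventually_nhds_iff] at hev
  obtain ⟨δ, hδ0, hδ⟩ := hev
  set a : ℝ := max (r₀ - δ/2) (r₀/2) with hadef
  have ha0 : 0 < a := lt_of_lt_of_le (by linarith) (le_max_right _ _)
  have har : a < r₀ := by
    apply max_lt <;> linarith
  have hsub2 : Ioo a r₀ ⊆ Icc 0 R := fun s hs =>
    ⟨le_trans ha0.le hs.1.le, le_trans hs.2.le hr₀.2⟩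
  have hpos : ∀ s ∈ Ioo a r₀, 0 < φ s^2 * Real.exp (-s^2/2) * s^(k+1) := by
    intro s hs
    have hs0 : 0 < s := lt_trans ha0 hs.1
    have hdist : dist s r₀ < δ := by
      rw [Real.dist_eq, abs_lt]
      constructor
      · have : r₀ - δ/2 ≤ a := le_max_left _ _
        nlinarith [hs.1, hs.2]
      · linarith [hs.2, hδ0]
    have := hδ hdist (hsub2 hs)
    have hφs : φ s ≠ 0 := by
      intro hz
      rw [hz] at this
      simp at this
      nlinarith [abs_nonneg (φ r₀)]
    positivity
  have hIoosub : Ioo a r₀ ⊆ Ioo 0 R := fun s hs =>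
    ⟨lt_trans ha0 hs.1, lt_of_lt_of_le hs.2 hr₀.2⟩
  have hi2 : IntegrableOn (fun r => φ r^2 * Real.exp (-r^2/2) * r^(k+1)) (Ioo a r₀) :=
    hiD.mono_set hIoosub
  have h1 : 0 < ∫ s in a..r₀, φ s^2 * Real.exp (-s^2/2) * s^(k+1) := by
    apply intervalIntegral.intervalIntegral_pos_of_pos_on _ hpos har
    exact (intervalIntegrable_iff_integrableOn_Ioo_of_le har.le).mpr hi2
  have h2 : (∫ s in a..r₀, φ s^2 * Real.exp (-s^2/2) * s^(k+1))
      ≤ ∫ r in Ioo (0:ℝ) R, φ r^2 * Real.exp (-r^2/2) * r^(k+1) := by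
    rw [intervalIntegral.integral_of_le har.le, integral_Ioc_eq_integral_Ioo]
    apply setIntegral_mono_set hiD
    · filter_upwards [ae_restrict_mem measurableSet_Ioo] with s hs
      exact mul_nonneg (mul_nonneg (sq_nonneg _) (Real.exp_pos _).le) (pow_nonneg hs.1.le _)
    · exact HasSubset.Subset.eventuallyLE hIoosub
  linarith

lemma main_est (hR : 0 < R)
    (hd : ∀ r ∈ Icc (0:ℝ) R, HasDerivWithinAt φ (φ' r) (Icc (0:ℝ) R) r)
    (hc : ContinuousOn φ' (Icc (0:ℝ) R))
    (h0 : φ 0 = 0)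
    (hL0 : 0 ≤ L)
    (hL1 : ∀ r ∈ Icc (0:ℝ) R, |φ' r| ≤ L)
    (hL2 : ∀ r ∈ Icc (0:ℝ) R, |φ r| ≤ L * r) :
    (1 + 1/(max ((2*R^(k+2))/(R^k*Real.exp (-R^2/2))) (2*Real.exp (R^2/2)*R^2)))
        * (∫ r in Ioo (0:ℝ) R, φ r^2 * Real.exp (-r^2/2) * r^(k+1))
      ≤ ∫ r in Ioo (0:ℝ) R,
          (φ' r^2 + ((k:ℝ)+1) * φ r^2 / r^2) * Real.exp (-r^2/2) * r^(k+1) := by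
  set D : ℝ := ∫ r in Ioo (0:ℝ) R, φ r^2 * Real.exp (-r^2/2) * r^(k+1) with hD
  set I : ℝ := ∫ r in Ioo (0:ℝ) R, (φ' r - φ r / r)^2 * Real.exp (-r^2/2) * r^(k+1) with hI
  set B : ℝ := φ R^2 with hB
  set β : ℝ := R^k*Real.exp (-R^2/2) with hβ
  have hβ0 : 0 < β := by positivity
  set c₁ : ℝ := 2*R^(k+2) with hc₁
  set c₂ : ℝ := 2*Real.exp (R^2/2)*R^2 with hc₂
  set M : ℝ := max (c₁/β) c₂ with hM
  have hc₂0 : 0 < c₂ := by positivity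
  have hM0 : 0 < M := lt_of_lt_of_le hc₂0 (le_max_right _ _)
  have hI0 : 0 ≤ I := by
    apply setIntegral_nonneg measurableSet_Ioo
    intro r hr
    exact mul_nonneg (mul_nonneg (sq_nonneg _) (Real.exp_pos _).le) (pow_nonneg hr.1.le _)
  have hB0 : 0 ≤ B := sq_nonneg _
  have hiden := identity_lemma (k := k) hR hd hc h0 hL0 hL1 hL2
  have hpoin := poincare (k := k) hR hd hc hL0 hL1 hL2
  -- rewrite poincare rhs
  have hpoin' : D ≤ c₁*B + c₂*I := by
    have e : (2*(φ R/R)^2*R^(k+3) + 2*Real.exp (R^2/2)*I*R)*R = c₁*B + c₂*I := by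
      simp only [hc₁, hc₂, hB]
      have hRne : R ≠ 0 := ne_of_gt hR
      field_simp
      ring
    rw [← e]
    exact hpoin
  have hND : (∫ r in Ioo (0:ℝ) R,
      (φ' r^2 + ((k:ℝ)+1) * φ r^2 / r^2) * Real.exp (-r^2/2) * r^(k+1)) = D + I + B*β := by
    rw [hiden]
    simp only [hβ, hB]
    ring
  rw [hND]
  -- D ≤ M*(β*B + I)
  have key : D ≤ M*(B*β + I) := by
    have h1 : c₁*B ≤ M*(B*β) := by
      have : c₁*B = (c₁/β)*(B*β) := by
        field_simp
      rw [this]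
      apply mul_le_mul_of_nonneg_right (le_max_left _ _) (mul_nonneg hB0 hβ0.le)
    have h2 : c₂*I ≤ M*I := mul_le_mul_of_nonneg_right (le_max_right _ _) hI0
    calc D ≤ c₁*B + c₂*I := hpoin'
    _ ≤ M*(B*β) + M*I := add_le_add h1 h2
    _ = M*(B*β + I) := by ring
  -- conclude
  have hMne : M ≠ 0 := ne_of_gt hM0
  have : (1 + 1/M)*D = D + (1/M)*D := by ring
  rw [this]
  have h3 : (1/M)*D ≤ (1/M)*(M*(B*β+I)) := by
    apply mul_le_mul_of_nonneg_left key (by positivity)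
  have h4 : (1/M)*(M*(B*β+I)) = B*β + I := by
    field_simp
  linarith

end

/-- **Lemma 2.2.** For `m ≥ 2` and every `R > 0`, the first nonzero Neumann
eigenvalue of the origin-centered ball of radius `R` in Gauss space satisfies
`μ₁(B_R) > 1`. -/
theorem mu1Ball_gt_one (m : ℕ) (hm : 2 ≤ m) (R : ℝ) (hR : 0 < R) :
    1 < mu1Ball m R := by
  obtain ⟨k, rfl⟩ : ∃ k, m = k + 2 := ⟨m - 2, by omega⟩
  set M : ℝ := max ((2*R^(k+2))/(R^k*Real.exp (-R^2/2))) (2*Real.exp (R^2/2)*R^2) with hM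
  have hM0 : 0 < M := lt_of_lt_of_le (by positivity) (le_max_right _ _)
  have hexp : k + 2 - 1 = k + 1 := by omega
  have hcast : ((k+2:ℕ):ℝ) - 1 = (k:ℝ)+1 := by push_cast; ring
  -- the set is nonempty
  have hne : { q : ℝ | ∃ φ φ' : ℝ → ℝ, IsRadialTrial R φ φ' ∧
      q = (∫ r in Ioo (0 : ℝ) R,
            (φ' r ^ 2 + (((k+2:ℕ) : ℝ) - 1) * φ r ^ 2 / r ^ 2) *
              Real.exp (-r ^ 2 / 2) * r ^ (k+2 - 1)) /
          (∫ r in Ioo (0 : ℝ) R,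
            φ r ^ 2 * Real.exp (-r ^ 2 / 2) * r ^ (k+2 - 1)) }.Nonempty := by
    refine ⟨_, ⟨fun r => 3*R*r^2 - 2*r^3, fun r => 6*R*r - 6*r^2, ?_, rfl⟩⟩
    refine ⟨?_, ?_, by norm_num, by ring_nf, ⟨R, ⟨hR.le, le_rfl⟩, ?_⟩⟩
    · intro r _
      have h1 : HasDerivAt (fun x : ℝ => 3*R*x^2 - 2*x^3) (6*R*r - 6*r^2) r := by
        have h2 := ((hasDerivAt_pow 2 r).const_mul (3*R)).sub ((hasDerivAt_pow 3 r).const_mul 2)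
        refine h2.congr_deriv ?_
        push_cast
        ring
      exact h1.hasDerivWithinAt
    · exact Continuous.continuousOn (by continuity)
    · show 3*R*R^2 - 2*R^3 ≠ 0
      have he : 3*R*R^2 - 2*R^3 = R^3 := by ring
      rw [he]
      positivity
  have hlb : ∀ q ∈ { q : ℝ | ∃ φ φ' : ℝ → ℝ, IsRadialTrial R φ φ' ∧
      q = (∫ r in Ioo (0 : ℝ) R,
            (φ' r ^ 2 + (((k+2:ℕ) : ℝ) - 1) * φ r ^ 2 / r ^ 2) *
              Real.exp (-r ^ 2 / 2) * r ^ (k+2 - 1)) /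
          (∫ r in Ioo (0 : ℝ) R,
            φ r ^ 2 * Real.exp (-r ^ 2 / 2) * r ^ (k+2 - 1)) }, 1 + 1/M ≤ q := by
    rintro q ⟨φ, φ', ⟨hd, hc, h0, hR', hnz⟩, rfl⟩
    obtain ⟨L, hL0, hL1, hL2⟩ := phi_bound hR hd hc h0
    have hDpos := Dpos (k := k) hR hd hc h0 hL0.le hL1 hL2 hnz
    have hmain := main_est (k := k) hR hd hc h0 hL0.le hL1 hL2
    rw [hexp, hcast]
    rw [le_div_iff₀ hDpos]
    rw [hM] at *
    calc (1 + 1/(max ((2*R^(k+2))/(R^k*Real.exp (-R^2/2))) (2*Real.exp (R^2/2)*R^2)))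
          * (∫ r in Ioo (0:ℝ) R, φ r^2 * Real.exp (-r^2/2) * r^(k+1))
        ≤ ∫ r in Ioo (0:ℝ) R,
            (φ' r^2 + ((k:ℝ)+1) * φ r^2 / r^2) * Real.exp (-r^2/2) * r^(k+1) := hmain
    _ = _ := rfl
  have h1M : (0:ℝ) < 1/M := by positivity
  calc (1:ℝ) < 1 + 1/M := by linarith
  _ ≤ mu1Ball (k+2) R := le_csInf hne hlb
end
end

section
/- Let m ≥ 2, R > 0, μ ∈ ℝ, and let g ∈ C¹([0,R]) ∩ C²((0,R)) satisfy the ordinary differential equation g''(r) + ((m−1)/r − r) g'(r) + (μ − (m−1)/r²) g(r) = 0 for all r ∈ (0,R), together with g(0) = 0 and g'(R) = 0. Then μ ∫_0^R g(r)² e^{−r²/2} r^{m−1} dr = ∫_0^R (g'(r)² + (m−1) g(r)²/r²) e^{−r²/2} r^{m−1} dr, where both integrals are finite. -/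
open MeasureTheory Real Set

/-- **Identity (2.3).** Let `m ≥ 2`, `R > 0`, `μ ∈ ℝ`, and let
`g ∈ C¹([0,R]) ∩ C²((0,R))` satisfy
`g'' + ((m-1)/r - r) g' + (μ - (m-1)/r²) g = 0` on `(0,R)`, with `g(0) = 0` and
`g'(R) = 0`. Then
`μ ∫₀^R g² e^{-r²/2} r^{m-1} dr = ∫₀^R (g'² + (m-1)g²/r²) e^{-r²/2} r^{m-1} dr`,
both integrals being finite. -/
theorem radial_eigenvalue_identity
    (m : ℕ) (hm : 2 ≤ m) (R μ : ℝ) (hR : 0 < R) (g g' g'' : ℝ → ℝ)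
    (hg : ∀ r ∈ Icc (0 : ℝ) R, HasDerivWithinAt g (g' r) (Icc (0 : ℝ) R) r)
    (hg'cont : ContinuousOn g' (Icc (0 : ℝ) R))
    (hg' : ∀ r ∈ Ioo (0 : ℝ) R, HasDerivAt g' (g'' r) r)
    (hg''cont : ContinuousOn g'' (Ioo (0 : ℝ) R))
    (hode : ∀ r ∈ Ioo (0 : ℝ) R,
      g'' r + (((m : ℝ) - 1) / r - r) * g' r + (μ - ((m : ℝ) - 1) / r ^ 2) * g r = 0)
    (h0 : g 0 = 0) (hRderiv : g' R = 0) :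
    IntegrableOn (fun r => g r ^ 2 * Real.exp (-r ^ 2 / 2) * r ^ (m - 1))
        (Ioo (0 : ℝ) R) volume ∧
    IntegrableOn (fun r =>
        (g' r ^ 2 + ((m : ℝ) - 1) * g r ^ 2 / r ^ 2) *
          Real.exp (-r ^ 2 / 2) * r ^ (m - 1)) (Ioo (0 : ℝ) R) volume ∧
    μ * ∫ r in Ioo (0 : ℝ) R, g r ^ 2 * Real.exp (-r ^ 2 / 2) * r ^ (m - 1) =
      ∫ r in Ioo (0 : ℝ) R,
        (g' r ^ 2 + ((m : ℝ) - 1) * g r ^ 2 / r ^ 2) *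
          Real.exp (-r ^ 2 / 2) * r ^ (m - 1) := by
  obtain ⟨k, rfl⟩ : ∃ k, m = k + 2 := ⟨m - 2, by omega⟩
  have hsub : k + 2 - 1 = k + 1 := by omega
  simp only [hsub]
  set K : ℝ := ((k + 2 : ℕ) : ℝ) - 1 with hK
  have hKval : K = (k : ℝ) + 1 := by rw [hK]; push_cast; ring
  have hK0 : 0 ≤ K := by rw [hKval]; positivity
  -- continuity of g on [0, R]
  have hgc : ContinuousOn g (Icc (0 : ℝ) R) := fun r hr => (hg r hr).continuousWithinAt
  have hwcont : Continuous fun r : ℝ => Real.exp (-r ^ 2 / 2) := by continuity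
  -- bound on g'
  obtain ⟨M, hM⟩ := isCompact_Icc.exists_bound_of_continuousOn hg'cont
  have hM0 : 0 ≤ M := le_trans (norm_nonneg (g' 0)) (hM 0 ⟨le_refl _, hR.le⟩)
  -- |g r| ≤ M * r
  have hgb : ∀ r ∈ Icc (0 : ℝ) R, |g r| ≤ M * r := by
    intro r hr
    have := Convex.norm_image_sub_le_of_norm_hasDerivWithin_le hg hM (convex_Icc 0 R)
      (left_mem_Icc.2 hR.le) hr
    simpa [h0, Real.norm_eq_abs, abs_of_nonneg hr.1] using this
  -- first integrand
  have h1 : IntegrableOn (fun r => g r ^ 2 * Real.exp (-r ^ 2 / 2) * r ^ (k + 1))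
      (Ioo (0 : ℝ) R) volume := by
    apply IntegrableOn.mono_set _ Ioo_subset_Icc_self
    exact (((hgc.pow 2).mul hwcont.continuousOn).mul
      (continuous_pow (k + 1)).continuousOn).integrableOn_Icc
  -- the g'^2 part
  have h2a : IntegrableOn (fun r => g' r ^ 2 * Real.exp (-r ^ 2 / 2) * r ^ (k + 1))
      (Ioo (0 : ℝ) R) volume := by
    apply IntegrableOn.mono_set _ Ioo_subset_Icc_self
    exact (((hg'cont.pow 2).mul hwcont.continuousOn).mul
      (continuous_pow (k + 1)).continuousOn).integrableOn_Icc
  -- the (m-1) g^2 / r^2 part : bounded on (0, R)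
  have h2bcont : ContinuousOn (fun r => K * g r ^ 2 / r ^ 2 * Real.exp (-r ^ 2 / 2) * r ^ (k + 1))
      (Ioo (0 : ℝ) R) := by
    refine (((continuousOn_const.mul ((hgc.mono Ioo_subset_Icc_self).pow 2)).div
      (continuous_pow 2).continuousOn ?_).mul hwcont.continuousOn).mul
      (continuous_pow (k + 1)).continuousOn
    exact fun r hr => pow_ne_zero _ (ne_of_gt hr.1)
  have h2bbd : ∀ r ∈ Ioo (0 : ℝ) R,
      ‖K * g r ^ 2 / r ^ 2 * Real.exp (-r ^ 2 / 2) * r ^ (k + 1)‖ ≤ K * M ^ 2 * R ^ (k + 1) := by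
    intro r hr
    have hr0 : 0 < r := hr.1
    have hgr := hgb r ⟨hr.1.le, hr.2.le⟩
    have hsq : g r ^ 2 ≤ M ^ 2 * r ^ 2 := by nlinarith [abs_nonneg (g r), sq_abs (g r)]
    have hdiv : K * g r ^ 2 / r ^ 2 ≤ K * M ^ 2 := by
      rw [div_le_iff₀ (by positivity)]
      nlinarith [hK0, hsq, sq_nonneg r]
    have hw1 : Real.exp (-r ^ 2 / 2) ≤ 1 := Real.exp_le_one_iff.2 (by nlinarith)
    have hpow : r ^ (k + 1) ≤ R ^ (k + 1) := pow_le_pow_left₀ hr0.le hr.2.le _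
    rw [Real.norm_eq_abs, abs_of_nonneg (by positivity)]
    calc K * g r ^ 2 / r ^ 2 * Real.exp (-r ^ 2 / 2) * r ^ (k + 1)
        ≤ K * M ^ 2 * 1 * R ^ (k + 1) := by
          apply mul_le_mul _ hpow (by positivity) (by positivity)
          exact mul_le_mul hdiv hw1 (Real.exp_pos _).le (by positivity)
      _ = K * M ^ 2 * R ^ (k + 1) := by ring
  have h2b : IntegrableOn (fun r => K * g r ^ 2 / r ^ 2 * Real.exp (-r ^ 2 / 2) * r ^ (k + 1))
      (Ioo (0 : ℝ) R) volume := by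
    refine ⟨h2bcont.aestronglyMeasurable measurableSet_Ioo,
      HasFiniteIntegral.restrict_of_bounded (C := K * M ^ 2 * R ^ (k + 1)) measure_Ioo_lt_top ?_⟩
    exact (ae_restrict_mem measurableSet_Ioo).mono h2bbd
  -- second integrand
  have h2 : IntegrableOn (fun r =>
      (g' r ^ 2 + K * g r ^ 2 / r ^ 2) * Real.exp (-r ^ 2 / 2) * r ^ (k + 1))
      (Ioo (0 : ℝ) R) volume := by
    have heq : (fun r => (g' r ^ 2 + K * g r ^ 2 / r ^ 2) * Real.exp (-r ^ 2 / 2) * r ^ (k + 1))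
        = fun r => g' r ^ 2 * Real.exp (-r ^ 2 / 2) * r ^ (k + 1)
          + K * g r ^ 2 / r ^ 2 * Real.exp (-r ^ 2 / 2) * r ^ (k + 1) := by
      funext r; ring
    rw [heq]; exact h2a.add h2b
  refine ⟨h1, h2, ?_⟩
  -- the function to differentiate
  set F : ℝ → ℝ := fun r => g r * g' r * Real.exp (-r ^ 2 / 2) * r ^ (k + 1) with hF
  set φ : ℝ → ℝ := fun r =>
    (g' r ^ 2 + K * g r ^ 2 / r ^ 2 - μ * g r ^ 2) * Real.exp (-r ^ 2 / 2) * r ^ (k + 1) with hφ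
  have hFcont : ContinuousOn F (Icc (0 : ℝ) R) :=
    ((hgc.mul hg'cont).mul hwcont.continuousOn).mul (continuous_pow (k + 1)).continuousOn
  have hFderiv : ∀ x ∈ Ioo (0 : ℝ) R, HasDerivAt F (φ x) x := by
    intro x hx
    have hx0 : x ≠ 0 := ne_of_gt hx.1
    have hnhds : Icc (0 : ℝ) R ∈ nhds x := Icc_mem_nhds hx.1 hx.2
    have hgx : HasDerivAt g (g' x) x :=
      (hg x (Ioo_subset_Icc_self hx)).hasDerivAt hnhds
    have hg'x : HasDerivAt g' (g'' x) x := hg' x hx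
    have hwx : HasDerivAt (fun r : ℝ => Real.exp (-r ^ 2 / 2)) (-x * Real.exp (-x ^ 2 / 2)) x := by
      have hinner : HasDerivAt (fun r : ℝ => -r ^ 2 / 2) (-x) x := by
        have := ((hasDerivAt_pow 2 x).neg).div_const 2
        refine this.congr_deriv ?_
        simp; ring
      have := hinner.exp
      refine this.congr_deriv ?_
      ring
    have hpx : HasDerivAt (fun r : ℝ => r ^ (k + 1)) (((k : ℝ) + 1) * x ^ k) x := by
      have := hasDerivAt_pow (k + 1) x
      simpa using this
    have hD := ((hgx.mul hg'x).mul hwx).mul hpx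
    have hgpp : g'' x = -(K / x - x) * g' x - (μ - K / x ^ 2) * g x := by
      have h := hode x hx
      linarith
    refine hD.congr_deriv ?_
    rw [hφ]
    simp only [Pi.mul_apply]
    rw [hKval] at hgpp
    rw [hgpp, hKval]
    field_simp
    ring
  -- interval integrability of φ
  have hφeq : φ = fun r =>
      (g' r ^ 2 + K * g r ^ 2 / r ^ 2) * Real.exp (-r ^ 2 / 2) * r ^ (k + 1)
        - μ * (g r ^ 2 * Real.exp (-r ^ 2 / 2) * r ^ (k + 1)) := by
    funext r; rw [hφ]; ring
  have hφint : IntervalIntegrable φ volume 0 R := by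
    rw [intervalIntegrable_iff_integrableOn_Ioo_of_le hR.le, hφeq]
    exact h2.sub (h1.const_mul μ)
  have hFTC : ∫ r in (0 : ℝ)..R, φ r = F R - F 0 :=
    intervalIntegral.integral_eq_sub_of_hasDeriv_right_of_le hR.le hFcont
      (fun x hx => (hFderiv x hx).hasDerivWithinAt) hφint
  have hF0 : F 0 = 0 := by simp [hF, h0]
  have hFR : F R = 0 := by simp [hF, hRderiv]
  have hzero : ∫ r in Ioo (0 : ℝ) R, φ r = 0 := by
    rw [← MeasureTheory.integral_Ioc_eq_integral_Ioo, ← intervalIntegral.integral_of_le hR.le,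
      hFTC, hF0, hFR, sub_zero]
  rw [hφeq] at hzero
  rw [MeasureTheory.integral_sub h2 (h1.const_mul μ), MeasureTheory.integral_const_mul] at hzero
  linarith
end

section
/- Let m ≥ 2 and R > 0, and let g ∈ C¹([0,R]) ∩ C²((0,R)) be a nonnegative, not identically zero function satisfying g''(r) + ((m−1)/r − r) g'(r) + (μ_1(B_R) − (m−1)/r²) g(r) = 0 for all r ∈ (0,R), with g(0) = 0 and g'(R) = 0. Then g'(r) > 0 for all r ∈ (0,R). -/
open MeasureTheory Real Set
open Filter Topology

noncomputable section

private lemma weight_hasDerivAt (m : ℕ) (hm : 2 ≤ m) {r : ℝ} (hr : r ≠ 0) :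
    HasDerivAt (fun r : ℝ => Real.exp (-r ^ 2 / 2) * r ^ (m - 1))
      ((((m : ℝ) - 1) / r - r) * (Real.exp (-r ^ 2 / 2) * r ^ (m - 1))) r := by
  have h1 : HasDerivAt (fun r : ℝ => -r ^ 2 / 2) (-r) r := by
    have := ((hasDerivAt_pow 2 r).neg).div_const 2
    refine this.congr_deriv ?_
    push_cast; ring
  have hexp := h1.exp
  have hpow := hasDerivAt_pow (m - 1) r
  have h2 := hexp.mul hpow
  refine h2.congr_deriv ?_
  have hm1 : ((m - 1 : ℕ) : ℝ) = (m : ℝ) - 1 := by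
    push_cast [Nat.cast_sub (by omega : 1 ≤ m)]; ring
  have hpe : r ^ (m - 1) = r ^ (m - 1 - 1) * r := by
    rw [← pow_succ]; congr 1; omega
  rw [hm1, hpe]
  field_simp
  ring

private lemma integrableOn_of_bdd_s6 {a b M : ℝ} {f : ℝ → ℝ}
    (hf : ContinuousOn f (Ioo a b)) (hM : ∀ r ∈ Ioo a b, |f r| ≤ M) :
    IntegrableOn f (Ioo a b) := by
  refine ⟨hf.aestronglyMeasurable measurableSet_Ioo,
    HasFiniteIntegral.restrict_of_bounded (C := M) measure_Ioo_lt_top ?_⟩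
  filter_upwards [ae_restrict_mem measurableSet_Ioo] with r hrs
  simpa using hM r hrs

set_option maxHeartbeats 1000000 in
private lemma gronwall_zero (m : ℕ) (hm : 2 ≤ m) (R lam : ℝ) (g g' g'' : ℝ → ℝ)
    (hgAt : ∀ r ∈ Ioo (0:ℝ) R, HasDerivAt g (g' r) r)
    (hg' : ∀ r ∈ Ioo (0:ℝ) R, HasDerivAt g' (g'' r) r)
    (hode : ∀ r ∈ Ioo (0:ℝ) R, g'' r + (((m : ℝ) - 1) / r - r) * g' r +
        (lam - ((m : ℝ) - 1) / r ^ 2) * g r = 0)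
    {p q : ℝ} (hp : p ∈ Ioo (0:ℝ) R) (hq : q ∈ Ioo (0:ℝ) R)
    (hgp : g p = 0) (hg'p : g' p = 0) : g q = 0 ∧ g' q = 0 := by
  set c : ℝ := (m : ℝ) - 1 with hc
  have hc1 : (1:ℝ) ≤ c := by
    have : (2:ℝ) ≤ (m:ℝ) := by exact_mod_cast hm
    simp [hc]; linarith
  set a : ℝ := min p q with ha
  set b : ℝ := max p q with hb
  have ha0 : 0 < a := lt_min hp.1 hq.1
  have hbR : b < R := max_lt hp.2 hq.2
  have hab : a ≤ b := min_le_max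
  have hsub : Icc a b ⊆ Ioo (0:ℝ) R := fun t ht => ⟨lt_of_lt_of_le ha0 ht.1, lt_of_le_of_lt ht.2 hbR⟩
  set K : ℝ := 1 + (|lam| + c / a ^ 2) + 2 * (c / a + b) with hK
  set E : ℝ → ℝ := fun t => g t ^ 2 + g' t ^ 2 with hE
  have hEnn : ∀ t, 0 ≤ E t := fun t => by positivity
  have hEderiv : ∀ t ∈ Ioo (0:ℝ) R,
      HasDerivAt E (2 * g t * g' t + 2 * g' t * g'' t) t := by
    intro t ht
    have h1 := ((hgAt t ht).pow 2).add ((hg' t ht).pow 2)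
    refine h1.congr_deriv ?_
    push_cast
    ring
  have hEbound : ∀ t ∈ Icc a b, |2 * g t * g' t + 2 * g' t * g'' t| ≤ K * E t := by
    intro t ht
    have htI := hsub ht
    have ht0 : 0 < t := htI.1
    have hEt : E t = g t ^ 2 + g' t ^ 2 := rfl
    have hode' : g'' t = -((c / t - t) * g' t) - (lam - c / t ^ 2) * g t := by
      have := hode t htI; linarith
    have hα : |c / t - t| ≤ c / a + b := by
      rw [abs_sub_le_iff]
      have h1 : c / t ≤ c / a := div_le_div_of_nonneg_left (by linarith) ha0 ht.1
      have h2 : 0 ≤ c / t := by positivity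
      have h3 : 0 ≤ c / a := by positivity
      constructor <;> nlinarith [ht.1, ht.2, ha0]
    have hβ : |lam - c / t ^ 2| ≤ |lam| + c / a ^ 2 := by
      have h1 : c / t ^ 2 ≤ c / a ^ 2 := by
        apply div_le_div_of_nonneg_left (by linarith) (by positivity)
        nlinarith [ht.1]
      have h2 : 0 ≤ c / t ^ 2 := by positivity
      calc |lam - c / t ^ 2| ≤ |lam| + |c / t ^ 2| := abs_sub lam (c / t ^ 2)
        _ ≤ |lam| + c / a ^ 2 := by rw [abs_of_nonneg h2]; linarith
    have hxy : 2 * |g t| * |g' t| ≤ g t ^ 2 + g' t ^ 2 := by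
      nlinarith [sq_nonneg (|g t| - |g' t|), sq_abs (g t), sq_abs (g' t)]
    rw [hode']
    have hexpand : 2 * g t * g' t + 2 * g' t * (-((c / t - t) * g' t) - (lam - c / t ^ 2) * g t)
        = 2 * g t * g' t + (-(2 * (c / t - t) * g' t ^ 2)) + (-(2 * (lam - c / t ^ 2) * (g t * g' t))) := by
      ring
    rw [hexpand]
    have e1 : |2 * g t * g' t| ≤ g t ^ 2 + g' t ^ 2 := by
      rw [abs_mul, abs_mul, abs_two]; exact hxy
    have e2 : |(-(2 * (c / t - t) * g' t ^ 2))| ≤ 2 * (c / a + b) * (g t ^ 2 + g' t ^ 2) := by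
      rw [abs_neg, abs_mul, abs_mul, abs_two, abs_of_nonneg (sq_nonneg (g' t))]
      have h0 : (0:ℝ) ≤ c / a + b := le_trans (abs_nonneg _) hα
      have h1 : |c / t - t| * g' t ^ 2 ≤ (c / a + b) * (g t ^ 2 + g' t ^ 2) :=
        mul_le_mul hα (by nlinarith [sq_nonneg (g t)]) (sq_nonneg _) h0
      linarith
    have e3 : |(-(2 * (lam - c / t ^ 2) * (g t * g' t)))| ≤ (|lam| + c / a ^ 2) * (g t ^ 2 + g' t ^ 2) := by
      rw [abs_neg]
      have heq : |2 * (lam - c / t ^ 2) * (g t * g' t)| = |lam - c / t ^ 2| * (2 * |g t| * |g' t|) := by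
        rw [abs_mul, abs_mul, abs_mul, abs_two]; ring
      rw [heq]
      have h0 : (0:ℝ) ≤ |lam| + c / a ^ 2 := le_trans (abs_nonneg _) hβ
      have h1 : 0 ≤ 2 * |g t| * |g' t| := by positivity
      exact mul_le_mul hβ hxy h1 h0
    calc |2 * g t * g' t + (-(2 * (c / t - t) * g' t ^ 2)) + (-(2 * (lam - c / t ^ 2) * (g t * g' t)))|
        ≤ |2 * g t * g' t| + |(-(2 * (c / t - t) * g' t ^ 2))| + |(-(2 * (lam - c / t ^ 2) * (g t * g' t)))| :=
          abs_add_three _ _ _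
      _ ≤ (g t ^ 2 + g' t ^ 2) + 2 * (c / a + b) * (g t ^ 2 + g' t ^ 2) + (|lam| + c / a ^ 2) * (g t ^ 2 + g' t ^ 2) := by
          exact add_le_add (add_le_add e1 e2) e3
      _ = K * E t := by rw [hEt, hK]; ring
  -- forward propagation on [p, b], backward on [a, p]
  have hcontE : ∀ s : Set ℝ, s ⊆ Ioo (0:ℝ) R → ContinuousOn E s := by
    intro s hs
    exact fun t ht => ((hEderiv t (hs ht)).continuousAt).continuousWithinAt
  have hforward : ∀ t ∈ Icc p b, E t = 0 := by
    intro t ht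
    have hpb : Icc p b ⊆ Icc a b := Icc_subset_Icc (min_le_left _ _) le_rfl
    set F : ℝ → ℝ := fun t => E t * Real.exp (-K * t) with hF
    have hanti : AntitoneOn F (Icc p b) := by
      apply antitoneOn_of_hasDerivWithinAt_nonpos (convex_Icc _ _)
        (ContinuousOn.mul (hcontE _ (fun x hx => hsub (hpb hx)))
          (Real.continuous_exp.comp (continuous_const.mul continuous_id)).continuousOn)
        (f' := fun x => (2 * g x * g' x + 2 * g' x * g'' x - K * E x) * Real.exp (-K * x))
      · intro x hx
        rw [interior_Icc] at hx
        have hxI : x ∈ Ioo (0:ℝ) R := hsub (hpb (Ioo_subset_Icc_self hx))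
        have hexp : HasDerivAt (fun t : ℝ => Real.exp (-K * t)) (Real.exp (-K * x) * -K) x := by
          simpa using (HasDerivAt.exp ((hasDerivAt_id x).const_mul (-K)))
        have := (hEderiv x hxI).mul hexp
        refine HasDerivWithinAt.mono ?_ (interior_subset)
        apply HasDerivAt.hasDerivWithinAt
        refine this.congr_deriv ?_
        ring
      · intro x hx
        rw [interior_Icc] at hx
        have hxab : x ∈ Icc a b := hpb (Ioo_subset_Icc_self hx)
        have h1 := hEbound x hxab
        have h2 : 2 * g x * g' x + 2 * g' x * g'' x - K * E x ≤ 0 := by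
          have := le_of_abs_le h1; linarith
        have h3 : (0:ℝ) < Real.exp (-K * x) := Real.exp_pos _
        exact mul_nonpos_of_nonpos_of_nonneg h2 h3.le
    have hple : p ∈ Icc p b := ⟨le_refl _, ht.1.trans ht.2 |>.trans le_rfl⟩
    have := hanti ⟨le_refl p, le_max_left p q⟩ ht ht.1
    have hFp : F p = 0 := by simp [hF, hE, hgp, hg'p]
    rw [hFp] at this
    have hexp : (0:ℝ) < Real.exp (-K * t) := Real.exp_pos _
    have hFt : E t * Real.exp (-K * t) ≤ 0 := this
    refine le_antisymm ?_ (hEnn t)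
    by_contra hcon
    push_neg at hcon
    exact absurd hFt (not_le.mpr (mul_pos hcon hexp))
  have hbackward : ∀ t ∈ Icc a p, E t = 0 := by
    intro t ht
    have hap : Icc a p ⊆ Icc a b := Icc_subset_Icc le_rfl (le_max_left _ _)
    set G : ℝ → ℝ := fun t => E t * Real.exp (K * t) with hG
    have hmono : MonotoneOn G (Icc a p) := by
      apply monotoneOn_of_hasDerivWithinAt_nonneg (convex_Icc _ _)
        (ContinuousOn.mul (hcontE _ (fun x hx => hsub (hap hx)))
          (Real.continuous_exp.comp (continuous_const.mul continuous_id)).continuousOn)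
        (f' := fun x => (2 * g x * g' x + 2 * g' x * g'' x + K * E x) * Real.exp (K * x))
      · intro x hx
        rw [interior_Icc] at hx
        have hxI : x ∈ Ioo (0:ℝ) R := hsub (hap (Ioo_subset_Icc_self hx))
        have hexp : HasDerivAt (fun t : ℝ => Real.exp (K * t)) (Real.exp (K * x) * K) x := by
          simpa using (HasDerivAt.exp ((hasDerivAt_id x).const_mul K))
        have := (hEderiv x hxI).mul hexp
        refine HasDerivWithinAt.mono ?_ (interior_subset)
        apply HasDerivAt.hasDerivWithinAt
        refine this.congr_deriv ?_
        ring
      · intro x hx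
        rw [interior_Icc] at hx
        have hxab : x ∈ Icc a b := hap (Ioo_subset_Icc_self hx)
        have h1 := hEbound x hxab
        have h2 : 0 ≤ 2 * g x * g' x + 2 * g' x * g'' x + K * E x := by
          have := neg_abs_le (2 * g x * g' x + 2 * g' x * g'' x); linarith [le_of_abs_le h1,
            neg_le_of_abs_le h1]
        have h3 : (0:ℝ) < Real.exp (K * x) := Real.exp_pos _
        exact mul_nonneg h2 h3.le
    have := hmono ht ⟨min_le_left p q, le_refl p⟩ ht.2
    have hGp : G p = 0 := by simp [hG, hE, hgp, hg'p]
    rw [hGp] at this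
    have hexp : (0:ℝ) < Real.exp (K * t) := Real.exp_pos _
    have hGt : E t * Real.exp (K * t) ≤ 0 := this
    refine le_antisymm ?_ (hEnn t)
    by_contra hcon
    push_neg at hcon
    exact absurd hGt (not_le.mpr (mul_pos hcon hexp))
  have hEq : E q = 0 := by
    rcases le_total q p with h | h
    · exact hbackward q ⟨min_le_right p q, h⟩
    · exact hforward q ⟨h, le_max_right p q⟩
  have hEqq : g q ^ 2 + g' q ^ 2 = 0 := hEq
  constructor
  · nlinarith [sq_nonneg (g q), sq_nonneg (g' q)]
  · nlinarith [sq_nonneg (g q), sq_nonneg (g' q)]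


set_option maxHeartbeats 2000000 in
/-- **Lemma 2.3, inequality (2.7).** Let `m ≥ 2`, `R > 0`, and let
`g ∈ C¹([0,R]) ∩ C²((0,R))` be a nonnegative, not identically zero solution of
`g'' + ((m-1)/r - r) g' + (μ₁(B_R) - (m-1)/r²) g = 0` on `(0,R)` with
`g(0) = 0` and `g'(R) = 0`. Then `g'(r) > 0` for all `r ∈ (0,R)`. -/
theorem radial_eigenfunction_deriv_pos
    (m : ℕ) (hm : 2 ≤ m) (R : ℝ) (hR : 0 < R) (g g' g'' : ℝ → ℝ)
    (hg : ∀ r ∈ Icc (0 : ℝ) R, HasDerivWithinAt g (g' r) (Icc (0 : ℝ) R) r)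
    (hg'cont : ContinuousOn g' (Icc (0 : ℝ) R))
    (hg' : ∀ r ∈ Ioo (0 : ℝ) R, HasDerivAt g' (g'' r) r)
    (hg''cont : ContinuousOn g'' (Ioo (0 : ℝ) R))
    (hnonneg : ∀ r ∈ Icc (0 : ℝ) R, 0 ≤ g r)
    (hnontriv : ∃ r ∈ Icc (0 : ℝ) R, g r ≠ 0)
    (hode : ∀ r ∈ Ioo (0 : ℝ) R,
      g'' r + (((m : ℝ) - 1) / r - r) * g' r +
        (mu1Ball m R - ((m : ℝ) - 1) / r ^ 2) * g r = 0)
    (h0 : g 0 = 0) (hRderiv : g' R = 0) :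
    ∀ r ∈ Ioo (0 : ℝ) R, 0 < g' r := by
  intro r₁ hr₁
  by_contra hcon
  push_neg at hcon
  set lam : ℝ := mu1Ball m R with hlam
  set cm : ℝ := (m : ℝ) - 1 with hcm
  have hc1 : (1:ℝ) ≤ cm := by
    have : (2:ℝ) ≤ (m:ℝ) := by exact_mod_cast hm
    rw [hcm]; linarith
  have hc0 : (0:ℝ) < cm := by linarith
  have hgcont : ContinuousOn g (Icc 0 R) := fun r hr => (hg r hr).continuousWithinAt
  have hgAt : ∀ r ∈ Ioo (0:ℝ) R, HasDerivAt g (g' r) r := by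
    intro r hr
    exact (hg r (Ioo_subset_Icc_self hr)).hasDerivAt (Icc_mem_nhds hr.1 hr.2)
  -- positivity of g on (0, R)
  have hpos : ∀ p ∈ Ioo (0:ℝ) R, 0 < g p := by
    intro p hp
    rcases (hnonneg p (Ioo_subset_Icc_self hp)).lt_or_eq with h | h
    · exact h
    · exfalso
      have hgp : g p = 0 := h.symm
      have hg'p : g' p = 0 := by
        have hloc : IsLocalMin g p := by
          refine Filter.eventually_of_mem (Icc_mem_nhds hp.1 hp.2) fun x hx => ?_
          rw [hgp]; exact hnonneg x hx
        exact hloc.hasDerivAt_eq_zero (hgAt p hp)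
      have hzero : ∀ q ∈ Ioo (0:ℝ) R, g q = 0 := fun q hq =>
        (gronwall_zero m hm R lam g g' g'' hgAt hg' hode hp hq hgp hg'p).1
      have hgR : g R = 0 := by
        have hne : (𝓝[Ioo (0:ℝ) R] R).NeBot := by
          rw [← mem_closure_iff_nhdsWithin_neBot, closure_Ioo hR.ne]
          exact ⟨hR.le, le_refl R⟩
        have h1 : Filter.Tendsto g (𝓝[Ioo (0:ℝ) R] R) (𝓝 (g R)) :=
          (hgcont R ⟨hR.le, le_refl R⟩).mono_left (nhdsWithin_mono R Ioo_subset_Icc_self)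
        have h2 : Filter.Tendsto g (𝓝[Ioo (0:ℝ) R] R) (𝓝 0) := by
          apply Filter.Tendsto.congr' _ tendsto_const_nhds
          filter_upwards [self_mem_nhdsWithin] with x hx
          exact (hzero x hx).symm
        exact tendsto_nhds_unique h1 h2
      obtain ⟨r, hr, hner⟩ := hnontriv
      rcases hr.1.lt_or_eq with h1 | h1
      · rcases hr.2.lt_or_eq with h2 | h2
        · exact hner (hzero r ⟨h1, h2⟩)
        · exact hner (h2 ▸ hgR)
      · exact hner (h1 ▸ h0)
  -- find an interior critical point
  obtain ⟨r₀, hr₀I, hr₀'⟩ : ∃ r₀ ∈ Ioo (0:ℝ) R, g' r₀ = 0 := by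
    rcases hcon.lt_or_eq with hlt | heq
    · obtain ⟨t, htI, hgt⟩ : ∃ t ∈ Ioo (0:ℝ) r₁, g r₁ < g t := by
        have hs := hasDerivAt_iff_tendsto_slope.mp (hgAt r₁ hr₁)
        have hmono : 𝓝[<] r₁ ≤ 𝓝[≠] r₁ := nhdsWithin_mono _ (fun x hx => ne_of_lt hx)
        have hev : ∀ᶠ x in 𝓝[<] r₁, slope g r₁ x < 0 :=
          (hs.mono_left hmono).eventually_lt_const hlt
        have hev2 : ∀ᶠ x in 𝓝[<] r₁, x ∈ Ioo (0:ℝ) r₁ :=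
          Filter.eventually_of_mem (Ioo_mem_nhdsLT_of_mem ⟨hr₁.1, le_refl r₁⟩) (fun x hx => hx)
        obtain ⟨t, hts, htI⟩ := (hev.and hev2).exists
        refine ⟨t, htI, ?_⟩
        have hsl : (g t - g r₁) / (t - r₁) < 0 := by
          have := hts; rwa [slope_def_field] at this
        have h2 : t - r₁ < 0 := sub_neg.mpr htI.2
        rcases div_neg_iff.mp hsl with ⟨h3, h4⟩ | ⟨h3, h4⟩
        · linarith
        · linarith
      obtain ⟨rm, hrm, hmax⟩ := isCompact_Icc.exists_isMaxOn
        (nonempty_Icc.mpr hr₁.1.le) (hgcont.mono (Icc_subset_Icc le_rfl hr₁.2.le))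
      have hmax' : ∀ y ∈ Icc (0:ℝ) r₁, g y ≤ g rm := fun y hy => hmax hy
      have h1 : g r₁ < g rm := lt_of_lt_of_le hgt (hmax' t ⟨htI.1.le, htI.2.le⟩)
      have hrm0 : 0 < rm := by
        rcases hrm.1.lt_or_eq with h | h
        · exact h
        · exfalso
          have : g rm = 0 := h ▸ h0
          have := hnonneg r₁ (Ioo_subset_Icc_self hr₁)
          linarith
      have hrmr₁ : rm < r₁ := lt_of_le_of_ne hrm.2 (by rintro rfl; exact lt_irrefl _ h1)
      have hrmI : rm ∈ Ioo (0:ℝ) R := ⟨hrm0, hrmr₁.trans hr₁.2⟩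
      refine ⟨rm, hrmI, ?_⟩
      have hloc : IsLocalMax g rm :=
        Filter.eventually_of_mem (Icc_mem_nhds hrm0 hrmr₁) (fun x hx => hmax' x hx)
      exact hloc.hasDerivAt_eq_zero (hgAt rm hrmI)
    · exact ⟨r₁, hr₁, heq⟩
  have hgr₀ : 0 < g r₀ := hpos r₀ hr₀I
  -- bound on g' and g
  obtain ⟨M, hM⟩ := isCompact_Icc.exists_bound_of_continuousOn hg'cont
  have hgle : ∀ r ∈ Icc (0:ℝ) R, |g r| ≤ M * r := by
    intro r hr
    have h1 := (convex_Icc (0:ℝ) R).norm_image_sub_le_of_norm_hasDerivWithin_le hg hM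
      (⟨le_refl (0:ℝ), hR.le⟩ : (0:ℝ) ∈ Icc (0:ℝ) R) hr
    rw [h0] at h1
    simpa [Real.norm_eq_abs, abs_of_nonneg hr.1] using h1
  have hM0 : 0 ≤ M := le_trans (norm_nonneg _) (hM 0 ⟨le_refl _, hR.le⟩)
  set fA : ℝ → ℝ := fun r => g r ^ 2 * Real.exp (-r ^ 2 / 2) * r ^ (m - 1) with hfA
  set fN : ℝ → ℝ := fun r =>
    (g' r ^ 2 + cm * g r ^ 2 / r ^ 2) * Real.exp (-r ^ 2 / 2) * r ^ (m - 1) with hfN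
  have hexpcont : Continuous fun r : ℝ => Real.exp (-r ^ 2 / 2) := by
    apply Real.continuous_exp.comp; continuity
  have hpowcont : Continuous fun r : ℝ => (r:ℝ) ^ (m - 1) := continuous_pow _
  have hfAcont : ContinuousOn fA (Icc 0 R) :=
    ((hgcont.pow 2).mul hexpcont.continuousOn).mul hpowcont.continuousOn
  have hintA : IntegrableOn fA (Ioo 0 R) :=
    (hfAcont.integrableOn_Icc).mono_set Ioo_subset_Icc_self
  have hfNcontOn : ContinuousOn fN (Ioo 0 R) := by
    apply ContinuousOn.mul (ContinuousOn.mul ?_ hexpcont.continuousOn) hpowcont.continuousOn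
    apply ContinuousOn.add ((hg'cont.mono Ioo_subset_Icc_self).pow 2)
    apply ContinuousOn.div (continuousOn_const.mul ((hgcont.mono Ioo_subset_Icc_self).pow 2))
      (continuous_pow 2).continuousOn
    exact fun r hr => pow_ne_zero 2 (ne_of_gt hr.1)
  have hbN : ∀ r ∈ Ioo (0:ℝ) R, |fN r| ≤ (M ^ 2 + cm * M ^ 2) * R ^ (m - 1) := by
    intro r hr
    have h1 : 0 < r := hr.1
    have hrR : r ≤ R := hr.2.le
    have hg2 : g r ^ 2 ≤ M ^ 2 * r ^ 2 := by
      have h2 := hgle r ⟨h1.le, hrR⟩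
      have h3 : |g r| ^ 2 ≤ (M * r) ^ 2 := pow_le_pow_left₀ (abs_nonneg _) h2 2
      calc g r ^ 2 = |g r| ^ 2 := (sq_abs _).symm
        _ ≤ (M * r) ^ 2 := h3
        _ = M ^ 2 * r ^ 2 := by ring
    have hg'2 : g' r ^ 2 ≤ M ^ 2 := by
      have h2 := hM r ⟨h1.le, hrR⟩
      rw [Real.norm_eq_abs] at h2
      calc g' r ^ 2 = |g' r| ^ 2 := (sq_abs _).symm
        _ ≤ M ^ 2 := pow_le_pow_left₀ (abs_nonneg _) h2 2
    have hdiv : cm * g r ^ 2 / r ^ 2 ≤ cm * M ^ 2 := by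
      rw [div_le_iff₀ (pow_pos h1 2)]
      nlinarith
    have hexp1 : Real.exp (-r ^ 2 / 2) ≤ 1 := by
      rw [Real.exp_le_one_iff]; nlinarith [sq_nonneg r]
    have hexp0 : (0:ℝ) < Real.exp (-r ^ 2 / 2) := Real.exp_pos _
    have hpowle : r ^ (m - 1) ≤ R ^ (m - 1) := pow_le_pow_left₀ h1.le hrR _
    have hpow0 : (0:ℝ) ≤ r ^ (m - 1) := pow_nonneg h1.le _
    have hdiv0 : 0 ≤ cm * g r ^ 2 / r ^ 2 :=
      div_nonneg (mul_nonneg hc0.le (sq_nonneg _)) (sq_nonneg _)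
    have hnn : 0 ≤ g' r ^ 2 + cm * g r ^ 2 / r ^ 2 := add_nonneg (sq_nonneg _) hdiv0
    have habs : |fN r| = fN r := abs_of_nonneg (mul_nonneg (mul_nonneg hnn hexp0.le) hpow0)
    rw [habs]
    show (g' r ^ 2 + cm * g r ^ 2 / r ^ 2) * Real.exp (-r ^ 2 / 2) * r ^ (m - 1) ≤ _
    calc (g' r ^ 2 + cm * g r ^ 2 / r ^ 2) * Real.exp (-r ^ 2 / 2) * r ^ (m - 1)
        ≤ (M ^ 2 + cm * M ^ 2) * 1 * R ^ (m - 1) := by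
          apply mul_le_mul ?_ hpowle hpow0 ?_
          · apply mul_le_mul (add_le_add hg'2 hdiv) hexp1 hexp0.le
            exact add_nonneg (sq_nonneg M) (mul_nonneg hc0.le (sq_nonneg M))
          · exact mul_nonneg (add_nonneg (sq_nonneg M)
              (mul_nonneg hc0.le (sq_nonneg M))) zero_le_one
      _ = (M ^ 2 + cm * M ^ 2) * R ^ (m - 1) := by ring
  have hintN : IntegrableOn fN (Ioo 0 R) := integrableOn_of_bdd_s6 hfNcontOn hbN
  -- the trial function
  set ph : ℝ → ℝ := fun r => g (min r r₀) with hph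
  set ph' : ℝ → ℝ := fun r => g' (min r r₀) with hph'
  have hmin_mem : ∀ r ∈ Icc (0:ℝ) R, min r r₀ ∈ Icc (0:ℝ) R := fun r hr =>
    ⟨le_min hr.1 hr₀I.1.le, (min_le_left _ _).trans hr.2⟩
  have htrial : IsRadialTrial R ph ph' := by
    refine ⟨?_, ?_, ?_, ?_, ?_⟩
    · intro r hr
      rcases lt_trichotomy r r₀ with hlt | heq | hgt
      · have he : ph' r = g' r := by simp only [hph']; rw [min_eq_left hlt.le]
        rw [he]
        refine (hg r hr).congr_of_eventuallyEq ?_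
          (by simp only [hph]; rw [min_eq_left hlt.le])
        filter_upwards [nhdsWithin_le_nhds (Iio_mem_nhds hlt)] with x hx
        simp only [hph]; rw [min_eq_left (le_of_lt hx)]
      · have he : ph' r = g' r := by simp only [hph']; rw [heq, min_self]
        rw [he]
        have h1 : HasDerivWithinAt ph (g' r) (Icc 0 r₀) r := by
          refine ((hg r hr).mono (Icc_subset_Icc le_rfl hr₀I.2.le)).congr ?_ ?_
          · intro x hx; simp only [hph]; rw [min_eq_left hx.2]
          · simp only [hph]; rw [heq, min_self]
        have h2 : HasDerivWithinAt ph (g' r) (Icc r₀ R) r := by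
          rw [heq, hr₀']
          refine (hasDerivWithinAt_const r₀ _ (g r₀)).congr ?_ ?_
          · intro x hx; simp only [hph]; rw [min_eq_right hx.1]
          · simp only [hph]; rw [min_self]
        exact (h1.union h2).mono (fun x hx => by
          rcases le_total x r₀ with h | h
          exacts [Or.inl ⟨hx.1, h⟩, Or.inr ⟨h, hx.2⟩])
      · have he : ph' r = 0 := by
          simp only [hph']; rw [min_eq_right hgt.le, hr₀']
        rw [he]
        refine (hasDerivWithinAt_const r _ (g r₀)).congr_of_eventuallyEq ?_ ?_
        · filter_upwards [nhdsWithin_le_nhds (Ioi_mem_nhds hgt)] with x hx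
          simp only [hph]; rw [min_eq_right (le_of_lt hx)]
        · simp only [hph]; rw [min_eq_right hgt.le]
    · exact hg'cont.comp ((continuous_id.min continuous_const).continuousOn) hmin_mem
    · simp only [hph]; rw [min_eq_left hr₀I.1.le, h0]
    · simp only [hph']; rw [min_eq_right hr₀I.2.le, hr₀']
    · exact ⟨r₀, ⟨hr₀I.1.le, hr₀I.2.le⟩, by simp only [hph]; rw [min_self]; exact ne_of_gt hgr₀⟩
  have hcm0' : (0:ℝ) ≤ (m:ℝ) - 1 := by rw [← hcm]; exact hc0.le
  have hmu_le : lam ≤ (∫ r in Ioo (0:ℝ) R,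
        (ph' r ^ 2 + cm * ph r ^ 2 / r ^ 2) * Real.exp (-r ^ 2 / 2) * r ^ (m - 1)) /
      (∫ r in Ioo (0:ℝ) R, ph r ^ 2 * Real.exp (-r ^ 2 / 2) * r ^ (m - 1)) := by
    rw [hlam]
    simp only [mu1Ball]
    apply csInf_le
    · refine ⟨0, ?_⟩
      rintro q ⟨ψ, ψ', hψ, rfl⟩
      apply div_nonneg
      · apply setIntegral_nonneg measurableSet_Ioo
        intro x hx
        have h5 : (0:ℝ) ≤ ψ' x ^ 2 + ((m:ℝ) - 1) * ψ x ^ 2 / x ^ 2 :=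
          add_nonneg (sq_nonneg _) (div_nonneg (mul_nonneg hcm0' (sq_nonneg _)) (sq_nonneg _))
        exact mul_nonneg (mul_nonneg h5 (Real.exp_pos _).le) (pow_nonneg hx.1.le _)
      · apply setIntegral_nonneg measurableSet_Ioo
        intro x hx
        exact mul_nonneg (mul_nonneg (sq_nonneg _) (Real.exp_pos _).le) (pow_nonneg hx.1.le _)
    · exact ⟨ph, ph', htrial, by rw [hcm]⟩
  -- split the integrals
  set A : ℝ := ∫ r in Ioo (0:ℝ) r₀, fA r with hA
  set N1 : ℝ := ∫ r in Ioo (0:ℝ) r₀, fN r with hN1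
  set B : ℝ := ∫ r in Ioo r₀ R, cm * g r₀ ^ 2 / r ^ 2 * Real.exp (-r ^ 2 / 2) * r ^ (m - 1) with hB
  set C : ℝ := ∫ r in Ioo r₀ R, g r₀ ^ 2 * Real.exp (-r ^ 2 / 2) * r ^ (m - 1) with hC
  have hIooSub : Ioo (0:ℝ) r₀ ⊆ Ioo (0:ℝ) R := fun x hx => ⟨hx.1, hx.2.trans hr₀I.2⟩
  have hintN0 : IntegrableOn fN (Ioo 0 r₀) := hintN.mono_set hIooSub
  have hintA0 : IntegrableOn fA (Ioo 0 r₀) := hintA.mono_set hIooSub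
  have hintN0c : IntegrableOn fN (Ioc 0 r₀) := hintN0.congr_set_ae Ioo_ae_eq_Ioc.symm
  have hintA0c : IntegrableOn fA (Ioc 0 r₀) := hintA0.congr_set_ae Ioo_ae_eq_Ioc.symm
  have hfBcont : ContinuousOn
      (fun r : ℝ => cm * g r₀ ^ 2 / r ^ 2 * Real.exp (-r ^ 2 / 2) * r ^ (m - 1)) (Icc r₀ R) := by
    apply ContinuousOn.mul (ContinuousOn.mul ?_ hexpcont.continuousOn) hpowcont.continuousOn
    apply ContinuousOn.div continuousOn_const (continuous_pow 2).continuousOn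
    intro x hx; exact pow_ne_zero 2 (ne_of_gt (lt_of_lt_of_le hr₀I.1 hx.1))
  have hintB : IntegrableOn
      (fun r : ℝ => cm * g r₀ ^ 2 / r ^ 2 * Real.exp (-r ^ 2 / 2) * r ^ (m - 1)) (Ioo r₀ R) :=
    hfBcont.integrableOn_Icc.mono_set Ioo_subset_Icc_self
  have hintC : IntegrableOn
      (fun r : ℝ => g r₀ ^ 2 * Real.exp (-r ^ 2 / 2) * r ^ (m - 1)) (Ioo r₀ R) :=
    (((continuous_const.mul hexpcont).mul hpowcont).continuousOn.integrableOn_Icc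
      (a := r₀) (b := R)).mono_set Ioo_subset_Icc_self
  have hsetsplit : Ioo (0:ℝ) R = Ioc 0 r₀ ∪ Ioo r₀ R := by
    ext x
    simp only [mem_Ioo, mem_Ioc, mem_union]
    constructor
    · rintro ⟨h1, h2⟩
      rcases le_or_gt x r₀ with h | h
      · exact Or.inl ⟨h1, h⟩
      · exact Or.inr ⟨h, h2⟩
    · rintro (⟨h1, h2⟩ | ⟨h1, h2⟩)
      · exact ⟨h1, lt_of_le_of_lt h2 hr₀I.2⟩
      · exact ⟨lt_trans hr₀I.1 h1, h2⟩
  have hdisj : Disjoint (Ioc (0:ℝ) r₀) (Ioo r₀ R) :=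
    Set.disjoint_left.mpr (fun x hx1 hx2 => absurd hx1.2 (not_le.mpr hx2.1))
  have hEqN : EqOn (fun r : ℝ =>
      (ph' r ^ 2 + cm * ph r ^ 2 / r ^ 2) * Real.exp (-r ^ 2 / 2) * r ^ (m - 1)) fN
      (Ioc (0:ℝ) r₀) := by
    intro x hx
    simp only [hph, hph', hfN]
    rw [min_eq_left hx.2]
  have hEqB : EqOn (fun r : ℝ =>
      (ph' r ^ 2 + cm * ph r ^ 2 / r ^ 2) * Real.exp (-r ^ 2 / 2) * r ^ (m - 1))
      (fun r : ℝ => cm * g r₀ ^ 2 / r ^ 2 * Real.exp (-r ^ 2 / 2) * r ^ (m - 1))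
      (Ioo r₀ R) := by
    intro x hx
    simp only [hph, hph']
    rw [min_eq_right (le_of_lt hx.1), hr₀']
    norm_num
  have hEqA : EqOn (fun r : ℝ => ph r ^ 2 * Real.exp (-r ^ 2 / 2) * r ^ (m - 1)) fA
      (Ioc (0:ℝ) r₀) := by
    intro x hx
    simp only [hph, hfA]
    rw [min_eq_left hx.2]
  have hEqC : EqOn (fun r : ℝ => ph r ^ 2 * Real.exp (-r ^ 2 / 2) * r ^ (m - 1))
      (fun r : ℝ => g r₀ ^ 2 * Real.exp (-r ^ 2 / 2) * r ^ (m - 1)) (Ioo r₀ R) := by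
    intro x hx
    simp only [hph]
    rw [min_eq_right (le_of_lt hx.1)]
  have hNUM : (∫ r in Ioo (0:ℝ) R,
      (ph' r ^ 2 + cm * ph r ^ 2 / r ^ 2) * Real.exp (-r ^ 2 / 2) * r ^ (m - 1)) = N1 + B := by
    rw [hsetsplit, setIntegral_union hdisj measurableSet_Ioo
      (hintN0c.congr_fun hEqN.symm measurableSet_Ioc)
      (hintB.congr_fun hEqB.symm measurableSet_Ioo),
      setIntegral_congr_fun measurableSet_Ioc hEqN,
      setIntegral_congr_fun measurableSet_Ioo hEqB,
      setIntegral_congr_set Ioo_ae_eq_Ioc.symm]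
  have hDEN : (∫ r in Ioo (0:ℝ) R, ph r ^ 2 * Real.exp (-r ^ 2 / 2) * r ^ (m - 1)) = A + C := by
    rw [hsetsplit, setIntegral_union hdisj measurableSet_Ioo
      (hintA0c.congr_fun hEqA.symm measurableSet_Ioc)
      (hintC.congr_fun hEqC.symm measurableSet_Ioo),
      setIntegral_congr_fun measurableSet_Ioc hEqA,
      setIntegral_congr_fun measurableSet_Ioo hEqC,
      setIntegral_congr_set Ioo_ae_eq_Ioc.symm]
  -- FTC identity : N1 = lam * A
  set H : ℝ → ℝ := fun t => g t * g' t * (Real.exp (-t ^ 2 / 2) * t ^ (m - 1)) with hH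
  have hHcont : ContinuousOn H (Icc 0 r₀) := by
    apply ContinuousOn.mul (ContinuousOn.mul (hgcont.mono (Icc_subset_Icc le_rfl hr₀I.2.le))
      (hg'cont.mono (Icc_subset_Icc le_rfl hr₀I.2.le)))
      (hexpcont.mul hpowcont).continuousOn
  have hHderiv : ∀ x ∈ Ioo (0:ℝ) r₀, HasDerivAt H (fN x - lam * fA x) x := by
    intro x hx
    have hxI : x ∈ Ioo (0:ℝ) R := hIooSub hx
    have hx0 : x ≠ 0 := ne_of_gt hx.1
    have h1 := ((hgAt x hxI).mul (hg' x hxI)).mul (weight_hasDerivAt m hm hx0)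
    have hg''eq : g'' x = -((cm / x - x) * g' x) - (lam - cm / x ^ 2) * g x := by
      have := hode x hxI; linarith
    refine h1.congr_deriv ?_
    simp only [hfN, hfA, Pi.mul_apply]
    rw [hg''eq, hcm]
    field_simp
    ring
  have hIntSub : IntervalIntegrable (fun r => fN r - lam * fA r) volume 0 r₀ := by
    rw [intervalIntegrable_iff_integrableOn_Ioc_of_le hr₀I.1.le]
    have hIS : IntegrableOn (fun r => fN r - lam * fA r) (Ioo (0:ℝ) r₀) :=
      hintN0.sub (hintA0.const_mul lam)
    exact hIS.congr_set_ae Ioo_ae_eq_Ioc.symm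
  have hFTC := intervalIntegral.integral_eq_sub_of_hasDeriv_right_of_le hr₀I.1.le hHcont
      (fun x hx => (hHderiv x hx).hasDerivWithinAt) hIntSub
  have hHr₀ : H r₀ = 0 := by simp only [hH]; rw [hr₀']; ring
  have hH0 : H 0 = 0 := by simp only [hH]; rw [h0]; ring
  rw [hHr₀, hH0, sub_zero, intervalIntegral.integral_of_le hr₀I.1.le,
      setIntegral_congr_set Ioo_ae_eq_Ioc.symm,
      integral_sub hintN0 (hintA0.const_mul lam), integral_const_mul] at hFTC
  have hkey : N1 = lam * A := by rw [hN1, hA]; linarith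
  -- strict inequality : k * A < N1
  set k : ℝ := cm / r₀ ^ 2 with hk
  have hstrict : k * A < N1 := by
    have hposOn : ∀ x ∈ Ioo (0:ℝ) r₀, 0 < fN x - k * fA x := by
      intro x hx
      have hx0 : 0 < x := hx.1
      have hgx : 0 < g x := hpos x (hIooSub hx)
      have h2 : cm / r₀ ^ 2 < cm / x ^ 2 := by
        apply div_lt_div_of_pos_left hc0 (pow_pos hx0 2)
        nlinarith [hx.2, hx0, hr₀I.1]
      have heq2 : fN x - k * fA x = (g' x ^ 2 + (cm / x ^ 2 - k) * g x ^ 2) *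
          (Real.exp (-x ^ 2 / 2) * x ^ (m - 1)) := by
        simp only [hfN, hfA, hk]; ring
      rw [heq2]
      apply mul_pos
      · have h3 : 0 < (cm / x ^ 2 - k) * g x ^ 2 :=
          mul_pos (by rw [hk]; linarith) (pow_pos hgx 2)
        nlinarith [sq_nonneg (g' x)]
      · exact mul_pos (Real.exp_pos _) (pow_pos hx0 _)
    have hint2 : IntervalIntegrable (fun r => fN r - k * fA r) volume 0 r₀ := by
      rw [intervalIntegrable_iff_integrableOn_Ioc_of_le hr₀I.1.le]
      have hIS : IntegrableOn (fun r => fN r - k * fA r) (Ioo (0:ℝ) r₀) :=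
        hintN0.sub (hintA0.const_mul k)
      exact hIS.congr_set_ae Ioo_ae_eq_Ioc.symm
    have h4 := intervalIntegral.intervalIntegral_pos_of_pos_on hint2 hposOn hr₀I.1
    rw [intervalIntegral.integral_of_le hr₀I.1.le,
        setIntegral_congr_set Ioo_ae_eq_Ioc.symm,
        integral_sub hintN0 (hintA0.const_mul k), integral_const_mul] at h4
    rw [hN1, hA]; linarith
  have hA0 : 0 < A := by
    have hint3 : IntervalIntegrable fA volume 0 r₀ := by
      rw [intervalIntegrable_iff_integrableOn_Ioc_of_le hr₀I.1.le]
      exact hintA0.congr_set_ae Ioo_ae_eq_Ioc.symm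
    have h4 := intervalIntegral.intervalIntegral_pos_of_pos_on hint3 (fun x hx => by
      simp only [hfA]
      exact mul_pos (mul_pos (pow_pos (hpos x (hIooSub hx)) 2) (Real.exp_pos _))
        (pow_pos hx.1 _)) hr₀I.1
    rwa [intervalIntegral.integral_of_le hr₀I.1.le,
        setIntegral_congr_set Ioo_ae_eq_Ioc.symm, ← hA] at h4
  have hC0 : 0 < C := by
    have hint3 : IntervalIntegrable
        (fun r : ℝ => g r₀ ^ 2 * Real.exp (-r ^ 2 / 2) * r ^ (m - 1)) volume r₀ R := by
      rw [intervalIntegrable_iff_integrableOn_Ioc_of_le hr₀I.2.le]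
      exact hintC.congr_set_ae Ioo_ae_eq_Ioc.symm
    have h4 := intervalIntegral.intervalIntegral_pos_of_pos_on hint3 (fun x hx =>
      mul_pos (mul_pos (pow_pos hgr₀ 2) (Real.exp_pos _))
        (pow_pos (lt_trans hr₀I.1 hx.1) _)) hr₀I.2
    rwa [intervalIntegral.integral_of_le hr₀I.2.le,
        setIntegral_congr_set Ioo_ae_eq_Ioc.symm, ← hC] at h4
  have hBC : B ≤ k * C := by
    rw [hB, hC, ← integral_const_mul]
    apply setIntegral_mono_on hintB (hintC.const_mul k) measurableSet_Ioo
    intro x hx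
    have hx0 : 0 < x := lt_trans hr₀I.1 hx.1
    have h5 : cm * g r₀ ^ 2 / x ^ 2 ≤ k * (g r₀ ^ 2) := by
      rw [hk, div_mul_eq_mul_div]
      apply div_le_div_of_nonneg_left ?_ (pow_pos hr₀I.1 2) ?_ |>.trans_eq ?_
      · exact mul_nonneg hc0.le (sq_nonneg _)
      · nlinarith [hx.1, hr₀I.1]
      · rfl
    calc cm * g r₀ ^ 2 / x ^ 2 * Real.exp (-x ^ 2 / 2) * x ^ (m - 1)
        ≤ k * g r₀ ^ 2 * Real.exp (-x ^ 2 / 2) * x ^ (m - 1) := by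
          apply mul_le_mul_of_nonneg_right (mul_le_mul_of_nonneg_right h5 (Real.exp_pos _).le)
            (pow_nonneg hx0.le _)
      _ = k * (g r₀ ^ 2 * Real.exp (-x ^ 2 / 2) * x ^ (m - 1)) := by ring
  rw [hNUM, hDEN] at hmu_le
  have hAC : 0 < A + C := by linarith
  have h6 : lam * (A + C) ≤ N1 + B := (le_div_iff₀ hAC).mp hmu_le
  have h7 : lam * C ≤ B := by nlinarith [hkey]
  have h8 : lam ≤ k := (mul_le_mul_iff_of_pos_right hC0).mp (h7.trans hBC)
  have h9 : k < lam := by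
    have h10 := hstrict
    rw [hkey] at h10
    exact (mul_lt_mul_iff_of_pos_right hA0).mp h10
  linarith
end
end

section
/- Let m ≥ 2 and R > 0, and let g ∈ C¹([0,R]) ∩ C²((0,R)) be a nonnegative, not identically zero function satisfying g''(r) + ((m−1)/r − r) g'(r) + (μ_1(B_R) − (m−1)/r²) g(r) = 0 for all r ∈ (0,R), with g(0) = 0 and g'(R) = 0. Then g'(r) − g(r)/r ≤ 0 for all r ∈ (0,R]. -/
open MeasureTheory Real Set

noncomputable section

theorem aux_radial_deriv_le (m : ℕ) (hm : 2 ≤ m) (R : ℝ) (hR : 0 < R) (μ : ℝ) (g g' g'' : ℝ → ℝ)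
    (hg : ∀ r ∈ Icc (0 : ℝ) R, HasDerivWithinAt g (g' r) (Icc (0 : ℝ) R) r)
    (hg'cont : ContinuousOn g' (Icc (0 : ℝ) R))
    (hg' : ∀ r ∈ Ioo (0 : ℝ) R, HasDerivAt g' (g'' r) r)
    (hnonneg : ∀ r ∈ Icc (0 : ℝ) R, 0 ≤ g r)
    (hnontriv : ∃ r ∈ Icc (0 : ℝ) R, g r ≠ 0)
    (hode : ∀ r ∈ Ioo (0 : ℝ) R,
      g'' r + (((m : ℝ) - 1) / r - r) * g' r +
        (μ - ((m : ℝ) - 1) / r ^ 2) * g r = 0)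
    (h0 : g 0 = 0) (hRderiv : g' R = 0) :
    ∀ r ∈ Ioc (0 : ℝ) R, g' r - g r / r ≤ 0 := by
  obtain ⟨k, rfl⟩ : ∃ k, m = k + 2 := ⟨m - 2, by omega⟩
  have hgc : ContinuousOn g (Icc 0 R) := fun x hx => (hg x hx).continuousWithinAt
  set f : ℝ → ℝ := fun s => g s * s ^ (k + 2) * Real.exp (-s ^ 2 / 2) with hf
  set P : ℝ → ℝ := fun r => Real.exp (-r ^ 2 / 2) * (r ^ (k + 2) * g' r - r ^ (k + 1) * g r)
    with hPdef
  have hfc : ContinuousOn f (Icc 0 R) := by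
    apply (hgc.mul (continuous_pow _).continuousOn).mul
    exact (Real.continuous_exp.comp (by continuity)).continuousOn
  have hfnn : ∀ s ∈ Icc (0 : ℝ) R, 0 ≤ f s := fun s hs => by
    have := hnonneg s hs
    have := (Real.exp_pos (-s ^ 2 / 2)).le
    have : 0 ≤ s ^ (k + 2) := pow_nonneg hs.1 _
    positivity
  have hPc : ContinuousOn P (Icc 0 R) := by
    apply ((Real.continuous_exp.comp (by continuity)).continuousOn).mul
    exact (((continuous_pow _).continuousOn.mul hg'cont).sub
      ((continuous_pow _).continuousOn.mul hgc))
  have hPd : ∀ s ∈ Ioo (0 : ℝ) R,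
      HasDerivAt P ((1 - μ) * f s) s := by
    intro s hs
    have hs0 : s ≠ 0 := ne_of_gt hs.1
    have hE : HasDerivAt (fun r : ℝ => Real.exp (-r ^ 2 / 2))
        (Real.exp (-s ^ 2 / 2) * (-s)) s := by
      have h1 : HasDerivAt (fun r : ℝ => -r ^ 2 / 2) (-s) s := by
        have := ((hasDerivAt_pow 2 s).neg.div_const 2)
        refine this.congr_deriv ?_
        norm_num
        ring
      exact h1.exp
    have hgs : HasDerivAt g (g' s) s :=
      (hg s (Ioo_subset_Icc_self hs)).hasDerivAt (Icc_mem_nhds hs.1 hs.2)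
    have hG1 : HasDerivAt (fun r : ℝ => r ^ (k + 2) * g' r)
        ((k + 2 : ℝ) * s ^ (k + 1) * g' s + s ^ (k + 2) * g'' s) s := by
      have := (hasDerivAt_pow (k + 2) s).mul (hg' s hs)
      refine this.congr_deriv ?_
      push_cast
      ring
    have hG2 : HasDerivAt (fun r : ℝ => r ^ (k + 1) * g r)
        ((k + 1 : ℝ) * s ^ k * g s + s ^ (k + 1) * g' s) s := by
      have := (hasDerivAt_pow (k + 1) s).mul hgs
      refine this.congr_deriv ?_
      push_cast
      ring
    have := hE.mul (hG1.sub hG2)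
    refine this.congr_deriv ?_
    simp only [Pi.sub_apply]
    have hode' := hode s hs
    have hg2 : g'' s = -((((k : ℝ) + 2) - 1) / s - s) * g' s
        - (μ - (((k : ℝ) + 2) - 1) / s ^ 2) * g s := by
      push_cast at hode'
      linarith
    rw [hg2, hf]
    field_simp
    ring
  have key : ∀ r ∈ Ioc (0 : ℝ) R,
      P r = (1 - μ) * ∫ s in (0 : ℝ)..r, f s := by
    intro r hr
    have hsub : Icc (0 : ℝ) r ⊆ Icc 0 R := Icc_subset_Icc le_rfl hr.2
    have hint : IntervalIntegrable (fun s => (1 - μ) * f s) volume 0 r :=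
      (((hfc.mono hsub).const_smul (1 - μ)).intervalIntegrable_of_Icc hr.1.le)
    have := intervalIntegral.integral_eq_sub_of_hasDerivAt_of_le hr.1.le
      (hPc.mono hsub)
      (fun x hx => hPd x ⟨hx.1, lt_of_lt_of_le hx.2 hr.2⟩) hint
    have hP0 : P 0 = 0 := by simp [hPdef]
    rw [intervalIntegral.integral_const_mul] at this
    rw [this, hP0, sub_zero]
  have hInn : ∀ r ∈ Ioc (0 : ℝ) R, 0 ≤ ∫ s in (0 : ℝ)..r, f s := by
    intro r hr
    exact intervalIntegral.integral_nonneg hr.1.le fun x hx =>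
      hfnn x ⟨hx.1, hx.2.trans hr.2⟩
  by_cases hμ : 1 ≤ μ
  · intro r hr
    have hPr : P r ≤ 0 := by
      rw [key r hr]
      exact mul_nonpos_of_nonpos_of_nonneg (by linarith) (hInn r hr)
    have hE : 0 < Real.exp (-r ^ 2 / 2) := Real.exp_pos _
    have hX : r ^ (k + 2) * g' r - r ^ (k + 1) * g r ≤ 0 := by
      by_contra h
      push_neg at h
      have := mul_pos hE h
      rw [hPdef] at hPr
      simp only at hPr
      linarith
    have hrpos := hr.1
    rw [sub_nonpos, le_div_iff₀ hrpos]
    by_contra h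
    push_neg at h
    have hp : (0 : ℝ) < r ^ (k + 1) := pow_pos hrpos _
    have h2 : 0 < r ^ (k + 1) * (g' r * r - g r) := mul_pos hp (by linarith)
    have h3 : r ^ (k + 1) * (g' r * r - g r) = r ^ (k + 2) * g' r - r ^ (k + 1) * g r := by
      rw [pow_succ]; ring
    rw [h3] at h2
    linarith
  · exfalso
    push_neg at hμ
    have hPR : P R ≤ 0 := by
      have hgR : 0 ≤ g R := hnonneg R ⟨hR.le, le_rfl⟩
      have hE : 0 < Real.exp (-R ^ 2 / 2) := Real.exp_pos _
      have hp : (0 : ℝ) ≤ R ^ (k + 1) := (pow_pos hR _).le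
      rw [hPdef]
      simp only [hRderiv, mul_zero, zero_sub]
      rw [mul_neg]
      exact neg_nonpos_of_nonneg (by positivity)
    have hkey := key R ⟨hR, le_rfl⟩
    have hI : (∫ s in (0 : ℝ)..R, f s) ≤ 0 := by
      by_contra h
      push_neg at h
      have := mul_pos (by linarith : (0:ℝ) < 1 - μ) h
      linarith [hkey ▸ this]
    have hIpos : 0 < ∫ s in (0 : ℝ)..R, f s := by
      obtain ⟨r₀, hr₀mem, hr₀⟩ := hnontriv
      have hgr₀ : 0 < g r₀ := lt_of_le_of_ne (hnonneg _ hr₀mem) (Ne.symm hr₀)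
      have hr₀pos : 0 < r₀ := by
        rcases hr₀mem.1.lt_or_eq with h | h
        · exact h
        · rw [← h] at hr₀; exact absurd h0 hr₀
      apply intervalIntegral.integral_pos hR hfc (fun x hx => hfnn x ⟨hx.1.le, hx.2⟩)
      refine ⟨r₀, hr₀mem, ?_⟩
      have : 0 < g r₀ * r₀ ^ (k + 2) * Real.exp (-r₀ ^ 2 / 2) :=
        mul_pos (mul_pos hgr₀ (pow_pos hr₀pos _)) (Real.exp_pos _)
      exact this
    linarith

/-- **Lemma 2.3, inequality (2.8).** Let `m ≥ 2`, `R > 0`, and let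
`g ∈ C¹([0,R]) ∩ C²((0,R))` be a nonnegative, not identically zero solution of
`g'' + ((m-1)/r - r) g' + (μ₁(B_R) - (m-1)/r²) g = 0` on `(0,R)` with
`g(0) = 0` and `g'(R) = 0`. Then `g'(r) - g(r)/r ≤ 0` for all `r ∈ (0,R]`. -/
theorem radial_eigenfunction_deriv_le
    (m : ℕ) (hm : 2 ≤ m) (R : ℝ) (hR : 0 < R) (g g' g'' : ℝ → ℝ)
    (hg : ∀ r ∈ Icc (0 : ℝ) R, HasDerivWithinAt g (g' r) (Icc (0 : ℝ) R) r)
    (hg'cont : ContinuousOn g' (Icc (0 : ℝ) R))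
    (hg' : ∀ r ∈ Ioo (0 : ℝ) R, HasDerivAt g' (g'' r) r)
    (hg''cont : ContinuousOn g'' (Ioo (0 : ℝ) R))
    (hnonneg : ∀ r ∈ Icc (0 : ℝ) R, 0 ≤ g r)
    (hnontriv : ∃ r ∈ Icc (0 : ℝ) R, g r ≠ 0)
    (hode : ∀ r ∈ Ioo (0 : ℝ) R,
      g'' r + (((m : ℝ) - 1) / r - r) * g' r +
        (mu1Ball m R - ((m : ℝ) - 1) / r ^ 2) * g r = 0)
    (h0 : g 0 = 0) (hRderiv : g' R = 0) :
    ∀ r ∈ Ioc (0 : ℝ) R, g' r - g r / r ≤ 0 :=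
  aux_radial_deriv_le m hm R hR (mu1Ball m R) g g' g'' hg hg'cont hg' hnonneg hnontriv
    hode h0 hRderiv
end
end
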